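/- arXiv:1805.09415 — 4 statements merged into one kernel-verified Lean document; each statement's English description precedes it below -/
import Mathlib

section
/- Let (X_t) be a random process over the reals adapted to its natural filtration, and let T = inf{t : X_t ≤ 0}. Suppose (a) X_t ≥ 0 for all t ≤ T, (b) there is δ > 0 such that X_t − E[X_{t+1} | X_0,…,X_t] ≥ δ for all t < T, and (c) there is c ≥ 0 such that X_t ≤ c for all t < T. Then E[T | X_0] ≤ X_0/δ. -/
open MeasureTheory ProbabilityTheory Filter
open scoped ENNReal NNReal

/-- The natural filtration of the process `X` up to time `t`:
the σ-algebra generated by `X 0, …, X t`. -/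
noncomputable def natSigma {Ω : Type*} [MeasurableSpace Ω] (X : ℕ → Ω → ℝ) (t : ℕ) :
    MeasurableSpace Ω :=
  ⨆ s ∈ Finset.range (t + 1), MeasurableSpace.comap (X s) inferInstance

/-- The first-hitting time `T = inf {t : X t ≤ 0}` (equal to `⊤` if no such time exists). -/
noncomputable def hitZero {Ω : Type*} (X : ℕ → Ω → ℝ) (ω : Ω) : ℕ∞ :=
  sInf ((fun n : ℕ => (n : ℕ∞)) '' {t : ℕ | X t ω ≤ 0})

section aux
variable {Ω : Type*} [MeasurableSpace Ω] (X : ℕ → Ω → ℝ)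

lemma natSigma_le (hXmeas : ∀ t, Measurable (X t)) (t : ℕ) :
    natSigma X t ≤ ‹MeasurableSpace Ω› := by
  rw [natSigma]
  apply iSup_le; intro s; apply iSup_le; intro _
  exact (hXmeas s).comap_le

lemma comap_le_natSigma {s t : ℕ} (h : s ≤ t) :
    MeasurableSpace.comap (X s) inferInstance ≤ natSigma X t := by
  rw [natSigma]
  exact le_iSup₂ (f := fun (s : ℕ) (_ : s ∈ Finset.range (t+1)) =>
    MeasurableSpace.comap (X s) inferInstance) s (Finset.mem_range.mpr (Nat.lt_succ_of_le h))

lemma hitZero_gt_iff (T : Ω → ℕ∞) (hT : ∀ ω, T ω = hitZero X ω) (t : ℕ) (ω : Ω) :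
    (t : ℕ∞) < T ω ↔ ∀ s ≤ t, 0 < X s ω := by
  rw [hT, hitZero]
  constructor
  · intro h s hs
    by_contra hXs
    have h2 : sInf ((fun n : ℕ => (n : ℕ∞)) '' {t : ℕ | X t ω ≤ 0}) ≤ (s : ℕ∞) :=
      sInf_le ⟨s, not_lt.mp hXs, rfl⟩
    have h3 : (s : ℕ∞) ≤ (t : ℕ∞) := by exact_mod_cast hs
    exact absurd (h.trans_le (h2.trans h3)).false (by simp)
  · intro h
    have h1 : ((t+1 : ℕ) : ℕ∞) ≤ sInf ((fun n : ℕ => (n : ℕ∞)) '' {t : ℕ | X t ω ≤ 0}) := by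
      apply le_sInf
      rintro b ⟨n, hn, rfl⟩
      have h2 : ¬ n ≤ t := fun hle => (h n hle).not_ge hn
      show ((t+1 : ℕ) : ℕ∞) ≤ (n : ℕ∞)
      exact_mod_cast Nat.succ_le_of_lt (not_le.mp h2)
    exact lt_of_lt_of_le (by exact_mod_cast Nat.lt_succ_self t) h1

end aux

lemma tsum_ite_lt (m : ℕ∞) :
    ∑' t : ℕ, (if (t : ℕ∞) < m then (1:ℝ≥0∞) else 0) = (m : ℝ≥0∞) := by
  cases m with
  | top => simp [ENNReal.tsum_const_eq_top_of_ne_zero]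
  | coe n =>
      rw [tsum_eq_sum (s := Finset.range n) (by
        intro t ht
        simp only [Finset.mem_range, not_lt] at ht
        simp [not_lt.mpr (by exact_mod_cast ht : (n:ℕ∞) ≤ t)])]
      have : ∀ t ∈ Finset.range n, (if (t : ℕ∞) < (n:ℕ∞) then (1:ℝ≥0∞) else 0) = 1 := by
        intro t ht
        simp only [Finset.mem_range] at ht
        simp [show (t:ℕ∞) < n by exact_mod_cast ht]
      rw [Finset.sum_congr rfl this]
      simp

lemma enat_succ_le {t : ℕ} {m : ℕ∞} (h : (t:ℕ∞) < m) : ((t+1:ℕ):ℕ∞) ≤ m := by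
  cases m with
  | top => simp
  | coe n => exact_mod_cast Nat.succ_le_of_lt (by exact_mod_cast h)

/-- **Upper Additive Drift, Bounded.** -/
theorem upper_additive_drift_bounded
    {Ω : Type*} [MeasurableSpace Ω] [StandardBorelSpace Ω]
    (μ : Measure Ω) [IsProbabilityMeasure μ]
    (X : ℕ → Ω → ℝ) (hXmeas : ∀ t, Measurable (X t)) (hXint : ∀ t, Integrable (X t) μ)
    (T : Ω → ℕ∞) (hT : ∀ ω, T ω = hitZero X ω)
    (δ : ℝ) (hδ : 0 < δ) (c : ℝ) (hc : 0 ≤ c)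
    (hnonneg : ∀ t : ℕ, ∀ᵐ ω ∂μ, (t : ℕ∞) ≤ T ω → 0 ≤ X t ω)
    (hdrift : ∀ t : ℕ, ∀ᵐ ω ∂μ, (t : ℕ∞) < T ω →
      δ ≤ X t ω - (μ[X (t + 1) | natSigma X t]) ω)
    (hbounded : ∀ t : ℕ, ∀ᵐ ω ∂μ, (t : ℕ∞) < T ω → X t ω ≤ c) :
    ∀ᵐ ω ∂μ,
      (∫⁻ ω', (T ω' : ℝ≥0∞) ∂(condExpKernel μ (MeasurableSpace.comap (X 0) inferInstance) ω))
        ≤ ENNReal.ofReal (X 0 ω / δ) := by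
  have hm0 : MeasurableSpace.comap (X 0) inferInstance ≤ ‹MeasurableSpace Ω› :=
    (hXmeas 0).comap_le
  set S : ℕ → Set Ω := fun t => {ω | ∀ s ≤ t, 0 < X s ω} with hSdef
  have hTS : ∀ (t : ℕ) (ω : Ω), (t : ℕ∞) < T ω ↔ ω ∈ S t := fun t ω =>
    hitZero_gt_iff X T hT t ω
  have hSmeas : ∀ t, MeasurableSet[natSigma X t] (S t) := by
    intro t
    have : S t = ⋂ s, ⋂ (_ : s ≤ t), {ω | 0 < X s ω} := by
      ext ω; simp [hSdef, Set.mem_iInter]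
    rw [this]
    refine MeasurableSet.iInter fun s => MeasurableSet.iInter fun hs => ?_
    exact comap_le_natSigma X hs _ ⟨Set.Ioi 0, measurableSet_Ioi, rfl⟩
  have hSmeas' : ∀ t, MeasurableSet (S t) := fun t => natSigma_le X hXmeas t _ (hSmeas t)
  have hSantitone : ∀ t, S (t+1) ⊆ S t := by
    intro t ω h s hs; exact h s (hs.trans (Nat.le_succ t))
  have hnonnegS : ∀ t : ℕ, ∀ᵐ ω ∂μ, ω ∈ S t → 0 ≤ X t ω := by
    intro t
    filter_upwards [hnonneg t] with ω h hω
    exact h ((hTS t ω).mpr hω).le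
  have hnonnegS' : ∀ t : ℕ, ∀ᵐ ω ∂μ, ω ∈ S t → 0 ≤ X (t+1) ω := by
    intro t
    filter_upwards [hnonneg (t+1)] with ω h hω
    exact h (by exact_mod_cast enat_succ_le ((hTS t ω).mpr hω))
  have hX0nonneg : ∀ᵐ ω ∂μ, 0 ≤ X 0 ω := by
    filter_upwards [hnonneg 0] with ω h; exact h (by simp)
  -- key set-integral inequality
  have hkey : ∀ A : Set Ω, MeasurableSet[MeasurableSpace.comap (X 0) inferInstance] A →
      ∀ n : ℕ,
      δ * ∑ s ∈ Finset.range n, (μ (A ∩ S s)).toReal ≤ ∫ ω in A, X 0 ω ∂μ := by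
    intro A hA n
    have hA' : MeasurableSet A := hm0 _ hA
    have hAS : ∀ t, MeasurableSet (A ∩ S t) := fun t => hA'.inter (hSmeas' t)
    set I : ℕ → ℝ := fun t => ∫ ω in A ∩ S t, X t ω ∂μ with hIdef
    have hInonneg : ∀ t, 0 ≤ I t := by
      intro t
      apply setIntegral_nonneg_of_ae_restrict
      rw [EventuallyLE, ae_restrict_iff' (hAS t)]
      filter_upwards [hnonnegS t] with ω h hω
      exact h hω.2
    have hstep : ∀ t, I (t+1) + δ * (μ (A ∩ S t)).toReal ≤ I t := by
      intro t
      have hsub : A ∩ S (t+1) ⊆ A ∩ S t := Set.inter_subset_inter_right A (hSantitone t)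
      have h0 : 0 ≤ᵐ[μ.restrict (A ∩ S t)] X (t+1) := by
        rw [EventuallyLE, ae_restrict_iff' (hAS t)]
        filter_upwards [hnonnegS' t] with ω h hω
        exact h hω.2
      have h1 : I (t+1) ≤ ∫ ω in A ∩ S t, X (t+1) ω ∂μ :=
        setIntegral_mono_set (hXint (t+1)).integrableOn h0
          (HasSubset.Subset.eventuallyLE hsub)
      have hASt : MeasurableSet[natSigma X t] (A ∩ S t) :=
        ((comap_le_natSigma X (Nat.zero_le t) _ hA)).inter (hSmeas t)
      have h2 : ∫ ω in A ∩ S t, X (t+1) ω ∂μ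
          = ∫ ω in A ∩ S t, (μ[X (t+1) | natSigma X t]) ω ∂μ :=
        (setIntegral_condExp (natSigma_le X hXmeas t) (hXint (t+1)) hASt).symm
      have h3 : ∫ ω in A ∩ S t, (μ[X (t+1) | natSigma X t]) ω ∂μ
          ≤ ∫ ω in A ∩ S t, (X t ω - δ) ∂μ := by
        apply integral_mono_ae integrable_condExp.integrableOn
          (((hXint t).sub (integrable_const δ)).integrableOn)
        rw [EventuallyLE, ae_restrict_iff' (hAS t)]
        filter_upwards [hdrift t] with ω h hω
        have := h ((hTS t ω).mpr hω.2)
        simp only [Pi.sub_apply]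
        linarith
      have h4 : ∫ ω in A ∩ S t, (X t ω - δ) ∂μ
          = I t - δ * (μ (A ∩ S t)).toReal := by
        rw [integral_sub (hXint t).integrableOn (integrable_const δ).integrableOn,
          setIntegral_const]
        ring_nf
        simp [mul_comm, Measure.real]
        simp only [hIdef]; ring
      linarith
    have hind : ∀ n, δ * ∑ s ∈ Finset.range n, (μ (A ∩ S s)).toReal + I n ≤ I 0 := by
      intro n
      induction n with
      | zero => simp
      | succ n ih =>
          rw [Finset.sum_range_succ]
          have := hstep n
          nlinarith [hInonneg (n+1)]
    have hI0 : I 0 ≤ ∫ ω in A, X 0 ω ∂μ := by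
      apply setIntegral_mono_set (hXint 0).integrableOn
        (ae_restrict_of_ae hX0nonneg)
        (HasSubset.Subset.eventuallyLE Set.inter_subset_left)
    nlinarith [hind n, hInonneg n]
  -- truncated hitting-time partial sums
  set f : ℕ → Ω → ℝ := fun n ω => ∑ s ∈ Finset.range n,
    (S s).indicator (fun _ => (1:ℝ)) ω with hfdef
  have hfmeas : ∀ n, Measurable (f n) := fun n =>
    Finset.measurable_sum _ fun s _ => measurable_const.indicator (hSmeas' s)
  have hfnonneg : ∀ n ω, 0 ≤ f n ω := fun n ω =>
    Finset.sum_nonneg fun s _ => Set.indicator_nonneg (fun _ _ => zero_le_one) ω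
  have hfint : ∀ (n : ℕ) (ν : Measure Ω), IsFiniteMeasure ν → Integrable (f n) ν := by
    intro n ν hν
    exact integrable_finset_sum _ fun s _ => (integrable_const 1).indicator (hSmeas' s)
  have hfintegral : ∀ (A : Set Ω), MeasurableSet A → ∀ n,
      ∫ ω in A, f n ω ∂μ = ∑ s ∈ Finset.range n, (μ (A ∩ S s)).toReal := by
    intro A hA n
    rw [hfdef]
    rw [integral_finset_sum _ fun s _ =>
      ((integrable_const (1:ℝ)).indicator (hSmeas' s)).integrableOn]
    refine Finset.sum_congr rfl fun s _ => ?_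
    rw [setIntegral_indicator (hSmeas' s), setIntegral_const, Set.inter_comm]
    simp [Measure.real]
  have hX0div : Integrable (fun ω => X 0 ω / δ) μ := (hXint 0).div_const δ
  have hsm : StronglyMeasurable[MeasurableSpace.comap (X 0) inferInstance]
      (fun ω => X 0 ω / δ) := by
    have h1 : Measurable[MeasurableSpace.comap (X 0) inferInstance] (X 0) :=
      measurable_iff_comap_le.mpr le_rfl
    exact (h1.div_const δ).stronglyMeasurable
  -- conditional expectation bound for the truncations
  have hcond : ∀ n : ℕ,
      μ[f n | MeasurableSpace.comap (X 0) inferInstance] ≤ᵐ[μ] fun ω => X 0 ω / δ := by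
    intro n
    refine ae_of_ae_trim hm0 ?_
    refine ae_le_of_forall_setIntegral_le (μ := μ.trim hm0)
      (integrable_condExp.trim hm0 stronglyMeasurable_condExp)
      (hX0div.trim hm0 hsm) ?_
    intro s hs _
    rw [← setIntegral_trim hm0 stronglyMeasurable_condExp hs,
      ← setIntegral_trim hm0 hsm hs,
      setIntegral_condExp hm0 (hfint n μ inferInstance) hs,
      hfintegral s (hm0 _ hs) n]
    have h2 : ∫ ω in s, X 0 ω / δ ∂μ = (∫ ω in s, X 0 ω ∂μ) / δ := integral_div δ _
    rw [h2, le_div_iff₀ hδ, mul_comm]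
    exact hkey s hs n
  -- transfer to the kernel
  have hker : ∀ n : ℕ,
      μ[f n | MeasurableSpace.comap (X 0) inferInstance] =ᵐ[μ] fun ω =>
        ∫ y, f n y ∂condExpKernel μ (MeasurableSpace.comap (X 0) inferInstance) ω :=
    fun n => condExp_ae_eq_integral_condExpKernel hm0 (hfint n μ inferInstance)
  have hall : ∀ᵐ ω ∂μ, ∀ n : ℕ,
      ∫ y, f n y ∂condExpKernel μ (MeasurableSpace.comap (X 0) inferInstance) ω
        ≤ X 0 ω / δ := by
    rw [ae_all_iff]
    intro n
    filter_upwards [hcond n, hker n] with ω h1 h2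
    rw [← h2]; exact h1
  -- conclude via monotone convergence in the kernel measure
  filter_upwards [hall] with ω hω
  set κ : Measure Ω := condExpKernel μ (MeasurableSpace.comap (X 0) inferInstance) ω with hκdef
  haveI : IsProbabilityMeasure κ := by
    rw [hκdef]; infer_instance
  have hgmeas : ∀ n : ℕ, Measurable fun ω' =>
      ∑ s ∈ Finset.range n, (S s).indicator (fun _ => (1:ℝ≥0∞)) ω' := fun n =>
    Finset.measurable_sum _ fun s _ => measurable_const.indicator (hSmeas' s)
  have hgmono : Monotone fun (n : ℕ) (ω' : Ω) =>
      ∑ s ∈ Finset.range n, (S s).indicator (fun _ => (1:ℝ≥0∞)) ω' := by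
    intro n m h ω'
    exact Finset.sum_le_sum_of_subset (Finset.range_subset_range.mpr h)
  have hpt : ∀ ω' : Ω, (T ω' : ℝ≥0∞)
      = ⨆ n : ℕ, ∑ s ∈ Finset.range n, (S s).indicator (fun _ => (1:ℝ≥0∞)) ω' := by
    intro ω'
    rw [← tsum_ite_lt (T ω'), ENNReal.tsum_eq_iSup_nat]
    congr 1
    funext n
    refine Finset.sum_congr rfl fun s _ => ?_
    by_cases h : ω' ∈ S s
    · simp [Set.indicator_of_mem h, (hTS s ω').mpr h]
    · rw [Set.indicator_of_notMem h,
        if_neg (show ¬ (s:ℕ∞) < T ω' from fun hlt => h ((hTS s ω').mp hlt))]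
  have hofReal : ∀ (n : ℕ) (ω' : Ω), ENNReal.ofReal (f n ω')
      = ∑ s ∈ Finset.range n, (S s).indicator (fun _ => (1:ℝ≥0∞)) ω' := by
    intro n ω'
    rw [hfdef]
    rw [ENNReal.ofReal_sum_of_nonneg
      (fun s _ => Set.indicator_nonneg (fun _ _ => zero_le_one) ω')]
    refine Finset.sum_congr rfl fun s _ => ?_
    by_cases h : ω' ∈ S s <;>
      simp [Set.indicator_of_mem, Set.indicator_of_notMem, h]
  calc ∫⁻ ω', (T ω' : ℝ≥0∞) ∂κ
      = ∫⁻ ω', ⨆ n : ℕ, ∑ s ∈ Finset.range n, (S s).indicator (fun _ => (1:ℝ≥0∞)) ω' ∂κ :=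
        lintegral_congr hpt
    _ = ⨆ n : ℕ, ∫⁻ ω', ∑ s ∈ Finset.range n, (S s).indicator (fun _ => (1:ℝ≥0∞)) ω' ∂κ :=
        lintegral_iSup hgmeas hgmono
    _ ≤ ENNReal.ofReal (X 0 ω / δ) := by
        refine iSup_le fun n => ?_
        have h1 : ∫⁻ ω', ∑ s ∈ Finset.range n, (S s).indicator (fun _ => (1:ℝ≥0∞)) ω' ∂κ
            = ENNReal.ofReal (∫ ω', f n ω' ∂κ) := by
          rw [ofReal_integral_eq_lintegral_ofReal (hfint n κ inferInstance)
            (Eventually.of_forall (hfnonneg n))]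
          exact lintegral_congr fun ω' => (hofReal n ω').symm
        rw [h1]
        exact ENNReal.ofReal_le_ofReal (hω n)
end

section
/- Let (X_t) be a random process over the reals, and let T = inf{t : X_t ≤ 0}. Suppose (a) X_t ≥ 0 for all t ≤ T, (b) there is δ > 0 such that X_t − E[X_{t+1} | X_0,…,X_t] ≥ δ for all t < T, and (c) there is c ≥ 0 such that |X_{t+1} − X_t| ≤ c for all t < T. Then E[T | X_0] ≤ X_0/δ. -/
open MeasureTheory ProbabilityTheory Filter
open scoped ENNReal NNReal

lemma le_hitZero_iff {Ω : Type*} (X : ℕ → Ω → ℝ) (ω : Ω) (k : ℕ) :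
    (k : ℕ∞) ≤ hitZero X ω ↔ ∀ j < k, 0 < X j ω := by
  unfold hitZero
  rw [le_sInf_iff]
  constructor
  · intro h j hj
    by_contra hle
    push_neg at hle
    have := h (j : ℕ∞) ⟨j, hle, rfl⟩
    exact absurd (Nat.cast_le.mp this) (not_le.mpr hj)
  · rintro h b ⟨t, ht, rfl⟩
    by_contra hb
    push_neg at hb
    exact absurd ht (not_le.mpr (h t (Nat.cast_lt.mp hb)))

lemma lt_hitZero_iff {Ω : Type*} (X : ℕ → Ω → ℝ) (ω : Ω) (k : ℕ) :
    (k : ℕ∞) < hitZero X ω ↔ ∀ j ≤ k, 0 < X j ω := by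
  rw [← ENat.add_one_le_iff (by simp : (k : ℕ∞) ≠ ⊤),
    show (k : ℕ∞) + 1 = ((k + 1 : ℕ) : ℕ∞) by push_cast; ring, le_hitZero_iff]
  constructor <;> intro h j hj <;> exact h j (by omega)

/-- The σ-algebra generated by `X 0` (not registered as an instance). -/
noncomputable def sigma0 {Ω : Type*} [MeasurableSpace Ω] (X : ℕ → Ω → ℝ) :
    MeasurableSpace Ω :=
  MeasurableSpace.comap (X 0) inferInstance

/-- **Upper Additive Drift, Bounded Step Size.** -/
theorem upper_additive_drift_bounded_step_size
    {Ω : Type*} [MeasurableSpace Ω] [StandardBorelSpace Ω]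
    (μ : Measure Ω) [IsProbabilityMeasure μ]
    (X : ℕ → Ω → ℝ) (hXmeas : ∀ t, Measurable (X t)) (hXint : ∀ t, Integrable (X t) μ)
    (T : Ω → ℕ∞) (hT : ∀ ω, T ω = hitZero X ω)
    (δ : ℝ) (hδ : 0 < δ) (c : ℝ) (hc : 0 ≤ c)
    (hnonneg : ∀ t : ℕ, ∀ᵐ ω ∂μ, (t : ℕ∞) ≤ T ω → 0 ≤ X t ω)
    (hdrift : ∀ t : ℕ, ∀ᵐ ω ∂μ, (t : ℕ∞) < T ω →
      δ ≤ X t ω - (μ[X (t + 1) | natSigma X t]) ω)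
    (hstep : ∀ t : ℕ, ∀ᵐ ω ∂μ, (t : ℕ∞) < T ω → |X (t + 1) ω - X t ω| ≤ c) :
    ∀ᵐ ω ∂μ,
      (∫⁻ ω', (T ω' : ℝ≥0∞) ∂(condExpKernel μ (MeasurableSpace.comap (X 0) inferInstance) ω))
        ≤ ENNReal.ofReal (X 0 ω / δ) := by
  suffices h : ∀ᵐ ω ∂μ,
      (∫⁻ ω', (T ω' : ℝ≥0∞) ∂(condExpKernel μ (sigma0 X) ω))
        ≤ ENNReal.ofReal (X 0 ω / δ) by exact h
  -- basic σ-algebra facts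
  have hF_le : ∀ t, natSigma X t ≤ ‹MeasurableSpace Ω› := by
    intro t
    exact iSup₂_le fun s _ => measurable_iff_comap_le.mp (hXmeas s)
  have hcomap_le : ∀ s t : ℕ, s ≤ t →
      MeasurableSpace.comap (X s) inferInstance ≤ natSigma X t := by
    intro s t hst
    exact le_iSup₂ (f := fun (s : ℕ) (_ : s ∈ Finset.range (t + 1)) =>
      MeasurableSpace.comap (X s) inferInstance) s (Finset.mem_range.mpr (by omega))
  have hm0_le_F : ∀ t, sigma0 X ≤ natSigma X t := fun t => hcomap_le 0 t (Nat.zero_le t)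
  have hm0 : sigma0 X ≤ ‹MeasurableSpace Ω› := (hm0_le_F 0).trans (hF_le 0)
  have hXsm : ∀ s t : ℕ, s ≤ t → StronglyMeasurable[natSigma X t] (X s) := by
    intro s t hst
    exact ((@measurable_iff_comap_le Ω ℝ (natSigma X t) _ (X s)).mpr
      (hcomap_le s t hst)).stronglyMeasurable
  -- the events {t < T}
  set A : ℕ → Set Ω := fun k => {ω | (k : ℕ∞) < T ω} with hAdef
  have hA_mem : ∀ k ω, ω ∈ A k ↔ (k : ℕ∞) < T ω := fun k ω => Iff.rfl
  have hA_eq : ∀ k, A k = ⋂ j ∈ Set.Iic k, {ω | 0 < X j ω} := by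
    intro k
    ext ω
    simp only [hAdef, Set.mem_setOf_eq, Set.mem_iInter, Set.mem_Iic, hT ω, lt_hitZero_iff]
  have hA_meas_F : ∀ k, MeasurableSet[natSigma X k] (A k) := by
    intro k
    rw [hA_eq]
    refine MeasurableSet.biInter (Set.Iic k).to_countable fun j hj => ?_
    exact hcomap_le j k hj _ ⟨Set.Ioi 0, measurableSet_Ioi, rfl⟩
  have hA_meas : ∀ k, MeasurableSet (A k) := fun k => hF_le k _ (hA_meas_F k)
  -- the drift increments
  set D : ℕ → Ω → ℝ :=
    fun k => (A k).indicator (fun ω => X (k + 1) ω - X k ω + δ) with hDdef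
  have hD_int : ∀ k, Integrable (D k) μ := fun k =>
    (((hXint (k + 1)).sub (hXint k)).add (integrable_const δ)).indicator (hA_meas k)
  -- the elapsed-time function
  set g : ℕ → Ω → ℝ :=
    fun n ω => ∑ k ∈ Finset.range n, (A k).indicator (fun _ => (1 : ℝ)) ω with hgdef
  have hg_nonneg : ∀ n ω, 0 ≤ g n ω := fun n ω =>
    Finset.sum_nonneg fun k _ => Set.indicator_nonneg (fun _ _ => zero_le_one) ω
  have hg_meas : ∀ n, Measurable (g n) := fun n =>
    Finset.measurable_sum _ fun k _ => measurable_const.indicator (hA_meas k)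
  have hg_mono : ∀ ω, Monotone fun n => g n ω := by
    intro ω n m hnm
    exact Finset.sum_le_sum_of_subset_of_nonneg (Finset.range_subset_range.mpr hnm)
      (fun k _ _ => Set.indicator_nonneg (fun _ _ => zero_le_one) ω)
  have hg_int : ∀ n (ν : Measure Ω) [IsFiniteMeasure ν], Integrable (g n) ν := by
    intro n ν _
    exact integrable_finset_sum _ fun k _ => (integrable_const 1).indicator (hA_meas k)
  -- the stopped process
  set W : ℕ → Ω → ℝ :=
    fun n ω => X 0 ω + ∑ k ∈ Finset.range n,
      (A k).indicator (fun ω' => X (k + 1) ω' - X k ω') ω with hWdef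
  have hae_nonneg : ∀ᵐ ω ∂μ, ∀ t : ℕ, (t : ℕ∞) ≤ T ω → 0 ≤ X t ω := ae_all_iff.mpr hnonneg
  have hW : ∀ᵐ ω ∂μ, ∀ n, ((∀ k < n, ω ∈ A k) → W n ω = X n ω) ∧ 0 ≤ W n ω := by
    filter_upwards [hae_nonneg] with ω hω
    intro n
    induction n with
    | zero =>
      constructor
      · intro _; simp [hWdef]
      · simpa [hWdef] using hω 0 (by simp)
    | succ n ih =>
      have hsum : W (n + 1) ω = W n ω +
          (A n).indicator (fun ω' => X (n + 1) ω' - X n ω') ω := by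
        simp [hWdef, Finset.sum_range_succ]; ring
      have hpart1 : (∀ k < n + 1, ω ∈ A k) → W (n + 1) ω = X (n + 1) ω := by
        intro hall
        have h1 : W n ω = X n ω := ih.1 fun k hk => hall k (by omega)
        have hn : ω ∈ A n := hall n (by omega)
        rw [hsum, h1, Set.indicator_of_mem hn]; ring
      refine ⟨hpart1, ?_⟩
      by_cases hn : ω ∈ A n
      · have hnT : (n : ℕ∞) < T ω := (hA_mem n ω).mp hn
        have hall : ∀ k < n + 1, ω ∈ A k := by
          intro k hk
          exact (hA_mem k ω).mpr (lt_of_le_of_lt (Nat.cast_le.mpr (by omega : k ≤ n)) hnT)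
        rw [hpart1 hall]
        apply hω (n + 1)
        have h2 : (n : ℕ∞) + 1 ≤ T ω := (ENat.add_one_le_iff (by simp)).mpr hnT
        have h3 : ((n + 1 : ℕ) : ℕ∞) = (n : ℕ∞) + 1 := by push_cast; ring
        rw [h3]
        exact h2
      · rw [hsum, Set.indicator_of_notMem hn, add_zero]
        exact ih.2
  -- decomposition  X 0 + ∑ D k = W n + δ • g n
  have hZW : ∀ n ω, X 0 ω + (∑ k ∈ Finset.range n, D k) ω = W n ω + δ * g n ω := by
    intro n ω
    have hDk : ∀ k, D k ω = (A k).indicator (fun ω' => X (k + 1) ω' - X k ω') ω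
        + δ * (A k).indicator (fun _ => (1 : ℝ)) ω := by
      intro k
      by_cases h : ω ∈ A k
      · simp only [hDdef, Set.indicator_of_mem h]; ring
      · simp [hDdef, Set.indicator_of_notMem h]
    simp only [Finset.sum_apply, hWdef, hgdef, Finset.mul_sum]
    rw [Finset.sum_congr rfl fun k _ => hDk k, Finset.sum_add_distrib]
    ring
  -- conditional expectation of each increment is nonpositive
  have hDk_le : ∀ k, μ[D k | natSigma X k] ≤ᵐ[μ] 0 := by
    intro k
    have hf_int : Integrable (X (k + 1) - (X k - fun _ => δ)) μ :=
      (hXint (k + 1)).sub ((hXint k).sub (integrable_const δ))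
    have hfeq : (fun ω => X (k + 1) ω - X k ω + δ) = X (k + 1) - (X k - fun _ => δ) := by
      funext ω; simp [Pi.sub_apply]; ring
    have h1 : μ[D k | natSigma X k] =ᵐ[μ]
        (A k).indicator (μ[X (k + 1) - (X k - fun _ => δ) | natSigma X k]) := by
      rw [hDdef]
      simpa [hfeq] using condExp_indicator (m := natSigma X k) (μ := μ) hf_int (hA_meas_F k)
    have h2 : μ[X (k + 1) - (X k - fun _ => δ) | natSigma X k] =ᵐ[μ]
        μ[X (k + 1) | natSigma X k] - (X k - fun _ => δ) := by
      have h3 := condExp_sub (m := natSigma X k) (μ := μ) (hXint (k + 1))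
        ((hXint k).sub (integrable_const δ))
      have h4 : μ[X k - (fun _ => δ) | natSigma X k] = X k - fun _ => δ :=
        condExp_of_stronglyMeasurable (μ := μ) (hF_le k)
          ((hXsm k k le_rfl).sub stronglyMeasurable_const) ((hXint k).sub (integrable_const δ))
      rw [h4] at h3
      exact h3
    filter_upwards [h1, h2, hdrift k] with ω hω1 hω2 hω3
    rw [hω1]
    by_cases h : ω ∈ A k
    · rw [Set.indicator_of_mem h, hω2]
      have hd := hω3 ((hA_mem k ω).mp h)
      simp only [Pi.sub_apply, Pi.zero_apply]
      linarith
    · rw [Set.indicator_of_notMem h]; rfl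
  have hDk_m0_le : ∀ k, μ[D k | sigma0 X] ≤ᵐ[μ] 0 := by
    intro k
    have htower := condExp_condExp_of_le (hm0_le_F k) (hF_le k) (f := D k) (μ := μ)
    have hmono := condExp_mono (m := sigma0 X) (μ := μ) integrable_condExp
      (integrable_const (0 : ℝ)) (by filter_upwards [hDk_le k] with ω h using h)
    have h0 : μ[(fun _ => (0 : ℝ)) | sigma0 X] = fun _ => (0 : ℝ) := condExp_const hm0 0
    rw [h0] at hmono
    filter_upwards [htower, hmono] with ω h1 h2
    rw [← h1]
    exact h2
  -- conditional bound for g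
  have hgd : ∀ n, μ[g n | sigma0 X] ≤ᵐ[μ] fun ω => X 0 ω / δ := by
    intro n
    have hZ_int : Integrable (X 0 + ∑ k ∈ Finset.range n, D k) μ :=
      (hXint 0).add (integrable_finset_sum' _ fun k _ => hD_int k)
    have hle : (fun ω => δ * g n ω) ≤ᵐ[μ] X 0 + ∑ k ∈ Finset.range n, D k := by
      filter_upwards [hW] with ω hω
      have h1 := (hω n).2
      have h2 := hZW n ω
      simp only [Pi.add_apply]
      linarith
    have hmono := condExp_mono (m := sigma0 X) (μ := μ)
      ((hg_int n μ).const_mul δ) hZ_int hle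
    have hsmul : μ[fun ω => δ * g n ω | sigma0 X] =ᵐ[μ]
        fun ω => δ * (μ[g n | sigma0 X]) ω := by
      have := condExp_smul (m := sigma0 X) (μ := μ) (δ : ℝ) (g n)
      simpa [Pi.smul_def, smul_eq_mul] using this
    have hZc : μ[X 0 + ∑ k ∈ Finset.range n, D k | sigma0 X] ≤ᵐ[μ] X 0 := by
      have hadd := condExp_add (m := sigma0 X) (μ := μ) (f := X 0)
        (g := ∑ k ∈ Finset.range n, D k) (hXint 0)
        (integrable_finset_sum' (Finset.range n) fun k _ => hD_int k)
      have hsum := condExp_finsetSum (m := sigma0 X) (μ := μ)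
        (s := Finset.range n) (f := D) fun k _ => hD_int k
      have hX0 : μ[X 0 | sigma0 X] = X 0 :=
        condExp_of_stronglyMeasurable (μ := μ) hm0
          ((@measurable_iff_comap_le Ω ℝ (sigma0 X) _ (X 0)).mpr le_rfl).stronglyMeasurable
          (hXint 0)
      have hall : ∀ᵐ ω ∂μ, ∀ k, (μ[D k | sigma0 X]) ω ≤ 0 := by
        rw [ae_all_iff]; intro k
        filter_upwards [hDk_m0_le k] with ω h using h
      filter_upwards [hadd, hsum, hall] with ω h1 h2 h3
      rw [h1]
      simp only [Pi.add_apply, hX0]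
      have h4 : (∑ k ∈ Finset.range n, μ[D k | sigma0 X]) ω ≤ 0 := by
        rw [Finset.sum_apply]
        exact Finset.sum_nonpos fun k _ => h3 k
      rw [h2]
      linarith
    filter_upwards [hmono, hsmul, hZc] with ω h1 h2 h3
    rw [h2] at h1
    rw [le_div_iff₀ hδ, mul_comm]
    exact h1.trans h3
  -- transfer to the kernel
  have hker : ∀ n, ∀ᵐ ω ∂μ,
      (∫⁻ y, ENNReal.ofReal (g n y) ∂(condExpKernel μ (sigma0 X) ω)) ≤
        ENNReal.ofReal (X 0 ω / δ) := by
    intro n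
    have heq := condExp_ae_eq_integral_condExpKernel hm0 (hg_int n μ)
    filter_upwards [heq, hgd n] with ω h1 h2
    have hgκ_int : Integrable (g n) (condExpKernel μ (sigma0 X) ω) := hg_int n _
    rw [← ofReal_integral_eq_lintegral_ofReal hgκ_int
      (Filter.Eventually.of_forall fun y => hg_nonneg n y)]
    apply ENNReal.ofReal_le_ofReal
    rw [← h1]
    exact h2
  have hmain : ∀ᵐ ω ∂μ, ∀ n,
      (∫⁻ y, ENNReal.ofReal (g n y) ∂(condExpKernel μ (sigma0 X) ω)) ≤
        ENNReal.ofReal (X 0 ω / δ) := ae_all_iff.mpr hker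
  -- pointwise identity : sup of g equals T
  have hTsup : ∀ y, (T y : ℝ≥0∞) = ⨆ n, ENNReal.ofReal (g n y) := by
    intro y
    have hg_val : ∀ n, g n y =
        ∑ k ∈ Finset.range n, if (k : ℕ∞) < T y then (1 : ℝ) else 0 := by
      intro n
      refine Finset.sum_congr rfl fun k _ => ?_
      simp [Set.indicator_apply, hAdef]
    cases hTy : T y with
    | top =>
      have hgn : ∀ n, g n y = n := by
        intro n
        rw [hg_val]
        simp [hTy, lt_top_iff_ne_top]
      have h1 : (⨆ n, ENNReal.ofReal (g n y)) = ⊤ := by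
        simp only [hgn, ENNReal.ofReal_natCast]
        exact ENNReal.iSup_natCast
      rw [h1]
      exact ENat.toENNReal_top
    | coe m =>
      have hgn : ∀ n, g n y = ((min n m : ℕ) : ℝ) := by
        intro n
        induction n with
        | zero => simp [hg_val]
        | succ n ihn =>
          rw [hg_val, Finset.sum_range_succ, ← hg_val, ihn, hTy]
          by_cases h : n < m
          · rw [if_pos (by exact_mod_cast h)]
            have hmin : min (n + 1) m = min n m + 1 := by omega
            rw [hmin]; push_cast; ring
          · rw [if_neg (by exact_mod_cast h)]
            have hmin : min (n + 1) m = min n m := by omega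
            rw [hmin]; ring
      have h1 : (⨆ n, ENNReal.ofReal (g n y)) = (m : ℝ≥0∞) := by
        simp only [hgn, ENNReal.ofReal_natCast]
        apply le_antisymm
        · exact iSup_le fun n => Nat.cast_le.mpr (min_le_right n m)
        · exact le_iSup_of_le m (by simp)
      rw [h1]
      exact ENat.toENNReal_coe m
  -- conclude
  filter_upwards [hmain] with ω hω
  calc (∫⁻ y, (T y : ℝ≥0∞) ∂(condExpKernel μ (sigma0 X) ω))
      = ∫⁻ y, ⨆ n, ENNReal.ofReal (g n y) ∂(condExpKernel μ (sigma0 X) ω) :=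
        lintegral_congr fun y => hTsup y
    _ = ⨆ n, ∫⁻ y, ENNReal.ofReal (g n y) ∂(condExpKernel μ (sigma0 X) ω) := by
        refine lintegral_iSup (fun n => (hg_meas n).ennreal_ofReal) ?_
        intro n m hnm y
        exact ENNReal.ofReal_le_ofReal (hg_mono y hnm)
    _ ≤ ENNReal.ofReal (X 0 ω / δ) := iSup_le hω
end

section
/- Let (X_t) be a random process over the reals, let x_min ≥ 0, and let T = inf{t : X_t ≤ x_min}. Let D be the smallest real interval containing all values x ≥ x_min that X_t can take for t ≤ T. Suppose (a) X_t ≥ x_min for all t ≤ T, and (b) there is a monotonically increasing function h : D → ℝ_{>0} such that X_t − E[X_{t+1} | X_0,…,X_t] ≥ h(X_t) for all t < T. Then E[T | X_0] ≤ ∫_{x_min}^{X_0} dz/h(z). -/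
open MeasureTheory Set
open scoped ENNReal NNReal

noncomputable def uvdHtil (h : ℝ → ℝ) (E : Set ℝ) (xmin : ℝ) : ℝ → ℝ :=
  fun x => (sSup (insert ((h xmin : EReal)) ((fun y => ((h y : ℝ) : EReal)) '' (E ∩ Set.Iic x)))).toReal

theorem uvdHtil_measurable (h : ℝ → ℝ) (E : Set ℝ) (xmin : ℝ) :
    Measurable (uvdHtil h E xmin) := by
  have hmono : Monotone (fun x => sSup (insert ((h xmin : EReal))
      ((fun y => ((h y : ℝ) : EReal)) '' (E ∩ Set.Iic x)))) := by
    intro a b hab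
    exact sSup_le_sSup (Set.insert_subset_insert (Set.image_mono
      (Set.inter_subset_inter_right _ (Set.Iic_subset_Iic.2 hab))))
  exact hmono.measurable.ereal_toReal

theorem uvdHtil_eq {h : ℝ → ℝ} {E : Set ℝ} {xmin : ℝ} (hmono : MonotoneOn h E)
    (hEI : E ⊆ Set.Ici xmin) (hxminE : xmin ∈ E) {x : ℝ} (hx : x ∈ E) :
    uvdHtil h E xmin x = h x := by
  have : sSup (insert ((h xmin : EReal)) ((fun y => ((h y : ℝ) : EReal)) '' (E ∩ Set.Iic x)))
      = (h x : EReal) := by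
    apply le_antisymm
    · apply sSup_le
      rintro b hb
      rcases Set.mem_insert_iff.1 hb with rfl | ⟨y, ⟨hyE, hyx⟩, rfl⟩
      · exact_mod_cast hmono hxminE hx (hEI hx)
      · simp only []
        exact_mod_cast hmono hyE hx hyx
    · exact le_sSup (Set.mem_insert_iff.2 (Or.inr ⟨x, ⟨hx, le_refl x⟩, rfl⟩))
  rw [uvdHtil, this, EReal.toReal_coe]

theorem uvdHtil_cases (h : ℝ → ℝ) (E : Set ℝ) (xmin : ℝ) (x : ℝ) :
    uvdHtil h E xmin x = 0 ∨ h xmin ≤ uvdHtil h E xmin x := by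
  set S := insert ((h xmin : EReal)) ((fun y => ((h y : ℝ) : EReal)) '' (E ∩ Set.Iic x)) with hS
  have hle : (h xmin : EReal) ≤ sSup S := le_sSup (Set.mem_insert _ _)
  rcases eq_or_ne (sSup S) ⊤ with htop | htop
  · left; rw [uvdHtil, ← hS, htop]; simp
  · right
    rw [uvdHtil, ← hS]
    have hbot : sSup S ≠ ⊥ := fun hb => by simp [hb] at hle
    have := EReal.toReal_le_toReal hle (by simp) htop
    simpa using this
open MeasureTheory Set

section
variable {h : ℝ → ℝ} {E : Set ℝ} {xmin : ℝ}

theorem uvd_inv_bounds (h : ℝ → ℝ) (E : Set ℝ) (xmin : ℝ) (hpos0 : 0 < h xmin) (z : ℝ) :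
    (uvdHtil h E xmin z)⁻¹ ∈ Set.Icc 0 (h xmin)⁻¹ := by
  rcases uvdHtil_cases h E xmin z with h0 | hge
  · rw [h0]; simp [le_of_lt (inv_pos.2 hpos0)]
  · exact ⟨inv_nonneg.2 (le_trans hpos0.le hge), inv_anti₀ hpos0 hge⟩

theorem uvd_intervalIntegrable (h : ℝ → ℝ) (E : Set ℝ) (xmin : ℝ) (hpos0 : 0 < h xmin) :
    ∀ a b : ℝ, IntervalIntegrable (fun z => (uvdHtil h E xmin z)⁻¹) volume a b := by
  intro a b
  rw [intervalIntegrable_iff]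
  refine Integrable.mono' (g := fun _ => (h xmin)⁻¹)
    (integrableOn_const measure_Ioc_lt_top.ne)
    (((uvdHtil_measurable h E xmin).inv).aestronglyMeasurable.restrict) ?_
  filter_upwards with z
  have := uvd_inv_bounds h E xmin hpos0 z
  rw [Real.norm_eq_abs, abs_of_nonneg this.1]
  exact this.2

theorem uvd_g_cont (h : ℝ → ℝ) (E : Set ℝ) (xmin : ℝ) (hpos0 : 0 < h xmin) :
    Continuous (fun x => ∫ z in xmin..x, (uvdHtil h E xmin z)⁻¹) :=
  intervalIntegral.continuous_primitive (uvd_intervalIntegrable h E xmin hpos0) xmin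

theorem uvd_g_key (hE : E.OrdConnected) (hmono : MonotoneOn h E)
    (hpos : ∀ x ∈ E, 0 < h x) (hEI : E ⊆ Set.Ici xmin) (hxminE : xmin ∈ E)
    {x y : ℝ} (hx : x ∈ E) (hy : y ∈ E) :
    (∫ z in xmin..y, (uvdHtil h E xmin z)⁻¹) ≤
      (∫ z in xmin..x, (uvdHtil h E xmin z)⁻¹) + (y - x) * (h x)⁻¹ := by
  have hpos0 : 0 < h xmin := hpos xmin hxminE
  have hII := uvd_intervalIntegrable h E xmin hpos0
  have hsub : (∫ z in xmin..y, (uvdHtil h E xmin z)⁻¹)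
      - (∫ z in xmin..x, (uvdHtil h E xmin z)⁻¹) = ∫ z in x..y, (uvdHtil h E xmin z)⁻¹ :=
    intervalIntegral.integral_interval_sub_left (hII xmin y) (hII xmin x)
  rcases le_total x y with hxy | hxy
  · have hb : ∀ z ∈ Set.Icc x y, (uvdHtil h E xmin z)⁻¹ ≤ (h x)⁻¹ := by
      intro z hz
      have hzE : z ∈ E := hE.out hx hy hz
      rw [uvdHtil_eq hmono hEI hxminE hzE]
      exact inv_anti₀ (hpos x hx) (hmono hx hzE hz.1)
    have := intervalIntegral.integral_mono_on hxy (hII x y)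
      (intervalIntegrable_const (c := (h x)⁻¹)) hb
    rw [intervalIntegral.integral_const] at this
    have h2 : (∫ z in x..y, (uvdHtil h E xmin z)⁻¹) ≤ (y - x) * (h x)⁻¹ := by
      simpa [smul_eq_mul] using this
    linarith [hsub]
  · have hb : ∀ z ∈ Set.Icc y x, (h x)⁻¹ ≤ (uvdHtil h E xmin z)⁻¹ := by
      intro z hz
      have hzE : z ∈ E := hE.out hy hx hz
      rw [uvdHtil_eq hmono hEI hxminE hzE]
      exact inv_anti₀ (hpos z hzE) (hmono hzE hx hz.2)
    have := intervalIntegral.integral_mono_on hxy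
      (intervalIntegrable_const (c := (h x)⁻¹)) (hII y x) hb
    rw [intervalIntegral.integral_const] at this
    have h2 : (x - y) * (h x)⁻¹ ≤ ∫ z in y..x, (uvdHtil h E xmin z)⁻¹ := by
      simpa [smul_eq_mul] using this
    have h3 : (∫ z in x..y, (uvdHtil h E xmin z)⁻¹)
        = - ∫ z in y..x, (uvdHtil h E xmin z)⁻¹ := (intervalIntegral.integral_symm y x)
    linarith [hsub]
end

theorem uvd_coe_tsum (n : ℕ∞) :
    (n : ℝ≥0∞) = ∑' t : ℕ, (if (t : ℕ∞) < n then (1:ℝ≥0∞) else 0) := by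
  induction n using ENat.recTopCoe with
  | top =>
    have : ∀ t : ℕ, (if (t : ℕ∞) < ⊤ then (1:ℝ≥0∞) else 0) = 1 := fun t =>
      if_pos (lt_of_le_of_ne le_top (ENat.coe_ne_top t))
    simp only [this]
    rw [ENNReal.tsum_const_eq_top_of_ne_zero one_ne_zero]
    simp
  | coe k =>
    have : ∀ t : ℕ, (if (t : ℕ∞) < (k : ℕ∞) then (1:ℝ≥0∞) else 0)
        = if t ∈ Finset.range k then 1 else 0 := by
      intro t; simp [Nat.cast_lt]
    simp only [this]
    rw [tsum_eq_sum (s := Finset.range k) (fun t ht => if_neg ht)]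
    rw [Finset.sum_ite_mem, Finset.inter_self, Finset.sum_const, Finset.card_range]
    simp
open MeasureTheory ProbabilityTheory Filter

/-- The σ-algebra generated by `X 0`. -/
noncomputable def uvdM0 {Ω : Type*} [MeasurableSpace Ω] (X : ℕ → Ω → ℝ) :
    MeasurableSpace Ω :=
  MeasurableSpace.comap (X 0) inferInstance

/-- **Upper Variable Drift, Unbounded, Hitting Target.** -/
theorem upper_variable_drift_unbounded_hitting_target
    {Ω : Type*} [MeasurableSpace Ω] [StandardBorelSpace Ω]
    (μ : Measure Ω) [IsProbabilityMeasure μ]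
    (X : ℕ → Ω → ℝ) (hXmeas : ∀ t, Measurable (X t)) (hXint : ∀ t, Integrable (X t) μ)
    (xmin : ℝ) (hxmin : 0 ≤ xmin)
    (T : Ω → ℕ∞)
    (hT : ∀ ω, T ω = sInf ((fun n : ℕ => (n : ℕ∞)) '' {t : ℕ | X t ω ≤ xmin}))
    -- `D` is a real interval containing `xmin` and all values `x ≥ xmin` the process
    -- can take up to time `T`
    (D : Set ℝ) (hDconn : D.OrdConnected) (hxminD : xmin ∈ D)
    (hDmem : ∀ t : ℕ, ∀ ω, (t : ℕ∞) ≤ T ω → xmin ≤ X t ω → X t ω ∈ D)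
    (h : ℝ → ℝ) (hmono : MonotoneOn h D) (hpos : ∀ x ∈ D, 0 < h x)
    (hnonneg : ∀ t : ℕ, ∀ᵐ ω ∂μ, (t : ℕ∞) ≤ T ω → xmin ≤ X t ω)
    (hdrift : ∀ t : ℕ, ∀ᵐ ω ∂μ, (t : ℕ∞) < T ω →
      h (X t ω) ≤ X t ω - (μ[X (t + 1) | natSigma X t]) ω) :
    ∀ᵐ ω ∂μ,
      (∫⁻ ω', (T ω' : ℝ≥0∞) ∂(condExpKernel μ (MeasurableSpace.comap (X 0) inferInstance) ω))
        ≤ ENNReal.ofReal (∫ z in xmin..(X 0 ω), 1 / h z) := by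
  classical
  -- basic sigma-algebra facts
  have hm0 : uvdM0 X ≤ (inferInstance : MeasurableSpace Ω) := (hXmeas 0).comap_le
  have hFle : ∀ t, natSigma X t ≤ (inferInstance : MeasurableSpace Ω) := by
    intro t
    refine iSup₂_le fun s _ => (hXmeas s).comap_le
  have hcomapF : ∀ s t : ℕ, s ≤ t →
      MeasurableSpace.comap (X s) inferInstance ≤ natSigma X t := by
    intro s t hst
    exact le_iSup₂ (f := fun (s : ℕ) (_ : s ∈ Finset.range (t+1)) =>
      MeasurableSpace.comap (X s) inferInstance) s (Finset.mem_range.2 (Nat.lt_succ_of_le hst))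
  have hm0F : ∀ t, uvdM0 X ≤ natSigma X t := fun t => hcomapF 0 t (Nat.zero_le t)
  have hXF : ∀ s t : ℕ, s ≤ t → Measurable[natSigma X t] (X s) := by
    intro s t hst
    exact (measurable_iff_comap_le.mpr le_rfl).mono (hcomapF s t hst) le_rfl
  -- the interval E and the functions h', g
  set E : Set ℝ := D ∩ Set.Ici xmin with hEdef
  have hE : E.OrdConnected := hDconn.inter Set.ordConnected_Ici
  have hxminE : xmin ∈ E := ⟨hxminD, le_refl xmin⟩
  have hEI : E ⊆ Set.Ici xmin := Set.inter_subset_right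
  have hmonoE : MonotoneOn h E := hmono.mono Set.inter_subset_left
  have hposE : ∀ x ∈ E, 0 < h x := fun x hx => hpos x hx.1
  have hpos0 : 0 < h xmin := hpos xmin hxminD
  set h' : ℝ → ℝ := uvdHtil h E xmin with hh'def
  set g : ℝ → ℝ := fun x => ∫ z in xmin..x, (h' z)⁻¹ with hgdef
  have hgcont : Continuous g := uvd_g_cont h E xmin hpos0
  have hgmeas : Measurable g := hgcont.measurable
  have hgbd : ∀ x, |g x| ≤ (h xmin)⁻¹ * (|x| + |xmin|) := by
    intro x
    have h1 : |g x| ≤ (h xmin)⁻¹ * |x - xmin| := by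
      have := intervalIntegral.norm_integral_le_of_norm_le_const
        (C := (h xmin)⁻¹) (f := fun z => (h' z)⁻¹) (a := xmin) (b := x) ?_
      · simpa [Real.norm_eq_abs] using this
      · intro z _
        have := uvd_inv_bounds h E xmin hpos0 z
        rw [Real.norm_eq_abs, abs_of_nonneg this.1]; exact this.2
    refine h1.trans ?_
    have : |x - xmin| ≤ |x| + |xmin| := abs_sub x xmin
    exact mul_le_mul_of_nonneg_left this (inv_nonneg.2 hpos0.le)
  have hgnn : ∀ x, xmin ≤ x → 0 ≤ g x := by
    intro x hx
    exact intervalIntegral.integral_nonneg hx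
      (fun u _ => (uvd_inv_bounds h E xmin hpos0 u).1)
  have hgkey : ∀ x ∈ E, ∀ y ∈ E, g y ≤ g x + (y - x) * (h x)⁻¹ :=
    fun x hx y hy => uvd_g_key hE hmonoE hposE hEI hxminE hx hy
  -- events
  set A : ℕ → Set Ω := fun t => {ω | ∀ s ≤ t, xmin < X s ω} with hAdef
  have hA_iff : ∀ t ω, ω ∈ A t ↔ (t : ℕ∞) < T ω := by
    intro t ω
    constructor
    · intro hω
      have hge : ((t : ℕ∞) + 1) ≤ T ω := by
        rw [hT ω]
        refine le_sInf ?_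
        rintro b ⟨s, hs, rfl⟩
        have hst : ¬ s ≤ t := fun hle => absurd hs (not_le.2 (hω s hle))
        have : t + 1 ≤ s := Nat.succ_le_of_lt (not_le.1 hst)
        exact_mod_cast Nat.cast_le.2 this
      calc (t : ℕ∞) < (t : ℕ∞) + 1 := (ENat.add_one_le_iff (ENat.coe_ne_top t)).1 le_rfl
        _ ≤ T ω := hge
    · intro hlt s hst
      by_contra hc
      have hmem : ((s : ℕ∞)) ∈ ((fun n : ℕ => (n : ℕ∞)) '' {t : ℕ | X t ω ≤ xmin}) :=
        ⟨s, not_lt.1 hc, rfl⟩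
      have : T ω ≤ (s : ℕ∞) := (hT ω) ▸ sInf_le hmem
      exact absurd (lt_of_lt_of_le hlt this) (by exact_mod_cast not_lt.2 (Nat.cast_le.2 hst))
  have hAsub : ∀ t, A (t+1) ⊆ A t := fun t ω hω s hs => hω s (hs.trans (Nat.le_succ t))
  have hAleT : ∀ t ω, ω ∈ A t → ∀ s : ℕ, s ≤ t + 1 → (s : ℕ∞) ≤ T ω := by
    intro t ω hω s hs
    have h1 : ((t : ℕ∞) + 1) ≤ T ω := ENat.add_one_le_iff (ENat.coe_ne_top t) |>.2
      ((hA_iff t ω).1 hω)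
    calc (s : ℕ∞) ≤ ((t + 1 : ℕ) : ℕ∞) := Nat.cast_le.2 hs
      _ = (t : ℕ∞) + 1 := by exact_mod_cast Nat.cast_add_one t
      _ ≤ T ω := h1
  have hA_eq : ∀ t, A t = ⋂ s ∈ Finset.range (t+1), X s ⁻¹' Set.Ioi xmin := by
    intro t
    ext ω
    simp only [Set.mem_iInter, Finset.mem_range, Set.mem_preimage, Set.mem_Ioi,
      hAdef, Set.mem_setOf_eq, Nat.lt_succ_iff]
  have hA_measF : ∀ t, MeasurableSet[natSigma X t] (A t) := by
    intro t
    rw [hA_eq t]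
    refine MeasurableSet.biInter (Finset.countable_toSet _) (fun s hs => ?_)
    have : MeasurableSet[MeasurableSpace.comap (X s) inferInstance] (X s ⁻¹' Set.Ioi xmin) :=
      ⟨Set.Ioi xmin, measurableSet_Ioi, rfl⟩
    exact (hcomapF s t (Nat.lt_succ_iff.1 (Finset.mem_range.1 hs))) _ this
  have hA_meas : ∀ t, MeasurableSet (A t) := fun t => hFle t _ (hA_measF t)
  have hA0m0 : MeasurableSet[uvdM0 X] (A 0) := by
    have : A 0 = X 0 ⁻¹' Set.Ioi xmin := by
      ext ω
      simp [hAdef, Nat.le_zero]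
    rw [this]
    exact ⟨Set.Ioi xmin, measurableSet_Ioi, rfl⟩
  -- processes
  set I : ℕ → Ω → ℝ := fun t => (A t).indicator (fun _ => (1:ℝ)) with hIdef
  set Z : ℕ → Ω → ℝ := fun t => (A t).indicator (fun ω => g (X t ω)) with hZdef
  set B : ℕ → Ω → ℝ := fun t => (A t).indicator (fun ω => (h' (X t ω))⁻¹) with hBdef
  -- a.e. membership in E
  have hmemE : ∀ t : ℕ, ∀ᵐ ω ∂μ, (t : ℕ∞) ≤ T ω → X t ω ∈ E := by
    intro t
    filter_upwards [hnonneg t] with ω hω ht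
    exact ⟨hDmem t ω ht (hω ht), hω ht⟩
  -- integrability
  have hIint : ∀ t, Integrable (I t) μ := fun t => (integrable_const 1).indicator (hA_meas t)
  have hZmeasF : ∀ t, StronglyMeasurable[natSigma X t] (Z t) := by
    intro t
    exact ((hgmeas.comp (hXF t t le_rfl)).stronglyMeasurable).indicator (hA_measF t)
  have hZint : ∀ t, Integrable (Z t) μ := by
    intro t
    refine Integrable.mono' (g := fun ω => (h xmin)⁻¹ * (|X t ω| + |xmin|))
      (((hXint t).abs.add (integrable_const _)).const_mul _)
      (((hZmeasF t).mono (hFle t)).aestronglyMeasurable) ?_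
    filter_upwards with ω
    rw [Real.norm_eq_abs]
    rcases Set.indicator_eq_zero_or_self (A t) (fun ω => g (X t ω)) ω with h0 | hid
    · rw [hZdef]
      simp only [h0, abs_zero]
      positivity
    · rw [hZdef]; simp only [hid]; exact hgbd (X t ω)
  have hBmeasF : ∀ t, StronglyMeasurable[natSigma X t] (B t) := by
    intro t
    exact ((((uvdHtil_measurable h E xmin).comp (hXF t t le_rfl)).inv).stronglyMeasurable).indicator
      (hA_measF t)
  -- bound for B
  have hBbd : ∀ t ω, ‖B t ω‖ ≤ (h xmin)⁻¹ := by
    intro t ω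
    rw [Real.norm_eq_abs]
    rcases Set.indicator_eq_zero_or_self (A t) (fun ω => (h' (X t ω))⁻¹) ω with h0 | hid
    · rw [hBdef]; simp only [h0, abs_zero]; positivity
    · rw [hBdef]; simp only [hid]
      have := uvd_inv_bounds h E xmin hpos0 (X t ω)
      rw [abs_of_nonneg this.1]; exact this.2
  have hWint : ∀ t, Integrable (B t * (X (t+1) - X t)) μ := fun t =>
    ((hXint (t+1)).sub (hXint t)).bdd_mul
      (((hBmeasF t).mono (hFle t)).aestronglyMeasurable) (Filter.Eventually.of_forall (hBbd t))
  -- Step A1 : pathwise bound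
  have hA1 : ∀ t, Z (t+1) ≤ᵐ[μ] Z t + B t * (X (t+1) - X t) := by
    intro t
    filter_upwards [hmemE t, hmemE (t+1)] with ω hEt hEt1
    simp only [Pi.add_apply, Pi.mul_apply, Pi.sub_apply]
    by_cases hω : ω ∈ A t
    · have hXtE : X t ω ∈ E := hEt (hAleT t ω hω t (Nat.le_succ t))
      have hXt1E : X (t+1) ω ∈ E := hEt1 (hAleT t ω hω (t+1) le_rfl)
      have hg1 : Z (t+1) ω ≤ g (X (t+1) ω) := by
        simp only [hZdef]
        by_cases hω1 : ω ∈ A (t+1)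
        · rw [Set.indicator_of_mem hω1]
        · rw [Set.indicator_of_notMem hω1]
          exact hgnn _ (hEI hXt1E)
      have hg2 : g (X (t+1) ω) ≤ g (X t ω) + (X (t+1) ω - X t ω) * (h (X t ω))⁻¹ :=
        hgkey _ hXtE _ hXt1E
      have hZt : Z t ω = g (X t ω) := by simp only [hZdef]; exact Set.indicator_of_mem hω _
      have hBt : B t ω = (h (X t ω))⁻¹ := by
        simp only [hBdef]
        rw [Set.indicator_of_mem hω, hh'def, uvdHtil_eq hmonoE hEI hxminE hXtE]
      rw [hZt, hBt]
      calc Z (t+1) ω ≤ g (X t ω) + (X (t+1) ω - X t ω) * (h (X t ω))⁻¹ := hg1.trans hg2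
        _ = g (X t ω) + (h (X t ω))⁻¹ * (X (t+1) ω - X t ω) := by ring
    · have hω1 : ω ∉ A (t+1) := fun hc => hω (hAsub t hc)
      simp only [hZdef, hBdef]
      simp [Set.indicator_of_notMem hω, Set.indicator_of_notMem hω1]
  -- Step A3 : conditional expectation of the dominating function
  have hA3 : ∀ t, μ[Z t + B t * (X (t+1) - X t)|natSigma X t]
      =ᵐ[μ] Z t + B t * (μ[X (t+1)|natSigma X t] - X t) := by
    intro t
    refine (condExp_add (hZint t) (hWint t) _).trans ?_
    have h1 : μ[Z t|natSigma X t] = Z t :=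
      condExp_of_stronglyMeasurable (hFle t) (hZmeasF t) (hZint t)
    have h2 : μ[B t * (X (t+1) - X t)|natSigma X t]
        =ᵐ[μ] B t * μ[X (t+1) - X t|natSigma X t] :=
      condExp_stronglyMeasurable_mul_of_bound (hFle t) (hBmeasF t)
        ((hXint (t+1)).sub (hXint t)) _ (Filter.Eventually.of_forall (hBbd t))
    have h3 : μ[X (t+1) - X t|natSigma X t] =ᵐ[μ] μ[X (t+1)|natSigma X t] - X t := by
      refine (condExp_sub (hXint (t+1)) (hXint t) _).trans ?_
      have : μ[X t|natSigma X t] = X t :=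
        condExp_of_stronglyMeasurable (hFle t) ((hXF t t le_rfl).stronglyMeasurable) (hXint t)
      rw [this]
    rw [h1]
    filter_upwards [h2, h3] with ω h2ω h3ω
    simp only [Pi.add_apply, Pi.mul_apply, Pi.sub_apply] at *
    rw [h2ω, h3ω]
  -- Key supermartingale inequality
  have hLemA : ∀ t, μ[Z (t+1)|natSigma X t] + I t ≤ᵐ[μ] Z t := by
    intro t
    have hmono1 : μ[Z (t+1)|natSigma X t] ≤ᵐ[μ] μ[Z t + B t * (X (t+1) - X t)|natSigma X t] :=
      condExp_mono (hZint (t+1)) ((hZint t).add (hWint t)) (hA1 t)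
    filter_upwards [hmono1, hA3 t, hdrift t, hmemE t] with ω h1 h2 h3 h4
    simp only [Pi.add_apply, Pi.mul_apply, Pi.sub_apply] at h1 h2 ⊢
    rw [h2] at h1
    by_cases hω : ω ∈ A t
    · have hTt : (t:ℕ∞) < T ω := (hA_iff t ω).1 hω
      have hXtE : X t ω ∈ E := h4 hTt.le
      have hd := h3 hTt
      have hBt : B t ω = (h (X t ω))⁻¹ := by
        simp only [hBdef]
        rw [Set.indicator_of_mem hω, hh'def, uvdHtil_eq hmonoE hEI hxminE hXtE]
      have hIt : I t ω = 1 := by simp only [hIdef]; exact Set.indicator_of_mem hω _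
      have hpost : 0 < h (X t ω) := hposE _ hXtE
      have hkey : B t ω * ((μ[X (t+1)|natSigma X t]) ω - X t ω) ≤ -1 := by
        rw [hBt]
        have hle : (μ[X (t+1)|natSigma X t]) ω - X t ω ≤ -(h (X t ω)) := by linarith
        calc (h (X t ω))⁻¹ * ((μ[X (t+1)|natSigma X t]) ω - X t ω)
            ≤ (h (X t ω))⁻¹ * (-(h (X t ω))) :=
              mul_le_mul_of_nonneg_left hle (inv_nonneg.2 hpost.le)
          _ = -1 := by field_simp
      rw [hIt]
      linarith
    · have hIt : I t ω = 0 := by simp only [hIdef]; exact Set.indicator_of_notMem hω _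
      have hBt : B t ω = 0 := by simp only [hBdef]; exact Set.indicator_of_notMem hω _
      have hZt : Z t ω = 0 := by simp only [hZdef]; exact Set.indicator_of_notMem hω _
      rw [hBt] at h1
      rw [hIt, hZt]
      simp only [zero_mul, add_zero] at h1
      linarith
  -- tower property down to σ(X 0)
  have hLemB : ∀ t, μ[I t|uvdM0 X] + μ[Z (t+1)|uvdM0 X] ≤ᵐ[μ] μ[Z t|uvdM0 X] := by
    intro t
    have h1 : μ[μ[Z (t+1)|natSigma X t] + I t|uvdM0 X] ≤ᵐ[μ] μ[Z t|uvdM0 X] :=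
      condExp_mono ((integrable_condExp).add (hIint t)) (hZint t) (hLemA t)
    have h2 : μ[μ[Z (t+1)|natSigma X t] + I t|uvdM0 X]
        =ᵐ[μ] μ[μ[Z (t+1)|natSigma X t]|uvdM0 X] + μ[I t|uvdM0 X] :=
      condExp_add integrable_condExp (hIint t) _
    have h3 : μ[μ[Z (t+1)|natSigma X t]|uvdM0 X] =ᵐ[μ] μ[Z (t+1)|uvdM0 X] :=
      condExp_condExp_of_le (hm0F t) (hFle t)
    filter_upwards [h1, h2, h3] with ω h1 h2 h3
    simp only [Pi.add_apply] at *
    linarith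
  -- nonnegativity
  have hZnn : ∀ t, 0 ≤ᵐ[μ] Z t := by
    intro t
    filter_upwards [hmemE t] with ω hω
    simp only [Pi.zero_apply, hZdef]
    by_cases hmem : ω ∈ A t
    · rw [Set.indicator_of_mem hmem]
      exact hgnn _ (hEI (hω (hAleT t ω hmem t (Nat.le_succ t))))
    · rw [Set.indicator_of_notMem hmem]
  have hrnn : ∀ t, 0 ≤ᵐ[μ] μ[Z t|uvdM0 X] := fun t => condExp_nonneg (hZnn t)
  have hqnn : ∀ t, 0 ≤ᵐ[μ] μ[I t|uvdM0 X] := fun t => condExp_nonneg (by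
    filter_upwards with ω
    simp only [Pi.zero_apply, hIdef]
    exact Set.indicator_nonneg (fun _ _ => zero_le_one) ω)
  -- partial sums
  have hpartial : ∀ n, (∑ t ∈ Finset.range n, μ[I t|uvdM0 X]) + μ[Z n|uvdM0 X]
      ≤ᵐ[μ] μ[Z 0|uvdM0 X] := by
    intro n
    induction n with
    | zero => filter_upwards with ω; simp
    | succ n ih =>
      filter_upwards [ih, hLemB n] with ω h1 h2
      simp only [Finset.sum_apply, Pi.add_apply, Finset.sum_range_succ] at *
      linarith
  -- identification at time 0
  have hZ0 : μ[Z 0|uvdM0 X] = Z 0 := by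
    refine condExp_of_stronglyMeasurable hm0 ?_ (hZint 0)
    refine StronglyMeasurable.indicator ?_ hA0m0
    exact (hgmeas.comp (measurable_iff_comap_le.mpr le_rfl)).stronglyMeasurable
  have hZ0le : ∀ᵐ ω ∂μ, Z 0 ω ≤ g (X 0 ω) := by
    filter_upwards [hmemE 0] with ω hω
    have hX0E : X 0 ω ∈ E := hω zero_le
    simp only [hZdef]
    by_cases hmem : ω ∈ A 0
    · rw [Set.indicator_of_mem hmem]
    · rw [Set.indicator_of_notMem hmem]
      exact hgnn _ (hEI hX0E)
  have hsum : ∀ n, ∀ᵐ ω ∂μ,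
      ∑ t ∈ Finset.range n, (μ[I t|uvdM0 X]) ω ≤ g (X 0 ω) := by
    intro n
    filter_upwards [hpartial n, hrnn n, hZ0le] with ω h1 h2 h3
    rw [hZ0] at h1
    simp only [Finset.sum_apply, Pi.add_apply, Pi.zero_apply] at *
    linarith
  -- kernel identities
  have hker : ∀ t : ℕ, ∀ᵐ ω ∂μ,
      condExpKernel μ (uvdM0 X) ω (A t) = ENNReal.ofReal ((μ[I t|uvdM0 X]) ω) := by
    intro t
    have h1 := condExpKernel_ae_eq_condExp (μ := μ) hm0 (hA_meas t)
    filter_upwards [h1] with ω h1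
    rw [hIdef]
    rw [← h1, measureReal_def, ENNReal.ofReal_toReal (measure_ne_top _ _)]
  have hTtsum : ∀ ω' : Ω, ((T ω' : ℝ≥0∞)) = ∑' t : ℕ, (A t).indicator (fun _ => (1:ℝ≥0∞)) ω' := by
    intro ω'
    rw [uvd_coe_tsum (T ω')]
    congr 1
    funext t
    by_cases hm : ω' ∈ A t
    · rw [Set.indicator_of_mem hm, if_pos ((hA_iff t ω').1 hm)]
    · rw [Set.indicator_of_notMem hm, if_neg (fun hc => hm ((hA_iff t ω').2 hc))]
  have hintRHS : ∀ᵐ ω ∂μ, (∫ z in xmin..(X 0 ω), 1 / h z) = g (X 0 ω) := by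
    filter_upwards [hmemE 0] with ω hω
    have hX0E : X 0 ω ∈ E := hω zero_le
    refine intervalIntegral.integral_congr ?_
    intro z hz
    have hzE : z ∈ E := by
      have huIcc : Set.uIcc xmin (X 0 ω) = Set.Icc xmin (X 0 ω) := Set.uIcc_of_le (hEI hX0E)
      exact hE.out hxminE hX0E (huIcc ▸ hz)
    simp only [one_div]
    rw [hh'def, uvdHtil_eq hmonoE hEI hxminE hzE]
  -- conclusion
  rw [show MeasurableSpace.comap (X 0) inferInstance = uvdM0 X from rfl]
  filter_upwards [ae_all_iff.2 hsum, ae_all_iff.2 hker, ae_all_iff.2 hqnn, hintRHS]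
    with ω hsumω hkerω hqω hRHSω
  calc ∫⁻ ω', (T ω' : ℝ≥0∞) ∂(condExpKernel μ (uvdM0 X) ω)
      = ∫⁻ ω', ∑' t : ℕ, (A t).indicator (fun _ => (1:ℝ≥0∞)) ω'
          ∂(condExpKernel μ (uvdM0 X) ω) := lintegral_congr (fun ω' => hTtsum ω')
    _ = ∑' t : ℕ, ∫⁻ ω', (A t).indicator (fun _ => (1:ℝ≥0∞)) ω'
          ∂(condExpKernel μ (uvdM0 X) ω) :=
        lintegral_tsum (fun t => (measurable_const.indicator (hA_meas t)).aemeasurable)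
    _ = ∑' t : ℕ, condExpKernel μ (uvdM0 X) ω (A t) := by
        refine tsum_congr fun t => ?_
        exact lintegral_indicator_one (hA_meas t)
    _ = ∑' t : ℕ, ENNReal.ofReal ((μ[I t|uvdM0 X]) ω) := tsum_congr fun t => hkerω t
    _ = ⨆ n, ∑ t ∈ Finset.range n, ENNReal.ofReal ((μ[I t|uvdM0 X]) ω) :=
        ENNReal.tsum_eq_iSup_nat
    _ ≤ ENNReal.ofReal (g (X 0 ω)) := by
        refine iSup_le fun n => ?_
        rw [← ENNReal.ofReal_sum_of_nonneg (fun t _ => hqω t)]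
        exact ENNReal.ofReal_le_ofReal (hsumω n)
    _ = ENNReal.ofReal (∫ z in xmin..(X 0 ω), 1 / h z) := by rw [hRHSω]
end

section
/- Let (X_t) be a random process over the reals, let x_min > 0, and let T = inf{t : X_t < x_min}. Suppose (a) X_0 ≥ x_min and X_t ≥ 0 for all t ≤ T, and (b) there is δ > 0 such that X_t − E[X_{t+1} | X_0,…,X_t] ≥ δ·X_t for all t < T. Then E[T | X_0] ≤ (1 + ln(X_0/x_min))/δ. -/
open MeasureTheory ProbabilityTheory Filter
open scoped ENNReal NNReal

private lemma enat_coe_eq_tsum (a : ℕ∞) :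
    (a : ℝ≥0∞) = ∑' t : ℕ, (if (t : ℕ∞) < a then (1:ℝ≥0∞) else 0) := by
  cases a with
  | top =>
    simp only [ENat.coe_lt_top, if_true]
    simp [ENNReal.tsum_const_eq_top_of_ne_zero]
  | coe m =>
    have : ∀ t : ℕ, ((t : ℕ∞) < (m:ℕ∞)) ↔ t < m := by exact_mod_cast fun t => Iff.rfl
    simp only [this]
    rw [tsum_eq_sum (s := Finset.range m) (by intro t ht; simp [Finset.mem_range] at ht; simp [ht])]
    rw [Finset.sum_congr rfl (fun t ht => if_pos (Finset.mem_range.mp ht))]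
    simp

/-- **Upper Multiplicative Drift, Unbounded, Below Target.** -/
theorem upper_multiplicative_drift_unbounded_below_target
    {Ω : Type*} [MeasurableSpace Ω] [StandardBorelSpace Ω]
    (μ : Measure Ω) [IsProbabilityMeasure μ]
    (X : ℕ → Ω → ℝ) (hXmeas : ∀ t, Measurable (X t)) (hXint : ∀ t, Integrable (X t) μ)
    (xmin : ℝ) (hxmin : 0 < xmin)
    (T : Ω → ℕ∞)
    (hT : ∀ ω, T ω = sInf ((fun n : ℕ => (n : ℕ∞)) '' {t : ℕ | X t ω < xmin}))
    (δ : ℝ) (hδ : 0 < δ)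
    (hstart : ∀ᵐ ω ∂μ, xmin ≤ X 0 ω)
    (hnonneg : ∀ t : ℕ, ∀ᵐ ω ∂μ, (t : ℕ∞) ≤ T ω → 0 ≤ X t ω)
    (hdrift : ∀ t : ℕ, ∀ᵐ ω ∂μ, (t : ℕ∞) < T ω →
      δ * X t ω ≤ X t ω - (μ[X (t + 1) | natSigma X t]) ω) :
    ∀ᵐ ω ∂μ,
      (∫⁻ ω', (T ω' : ℝ≥0∞) ∂(condExpKernel μ (MeasurableSpace.comap (X 0) inferInstance) ω))
        ≤ ENNReal.ofReal ((1 + Real.log (X 0 ω / xmin)) / δ) := by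
  classical
  -- σ-algebra facts
  have hFt_le : ∀ t, natSigma X t ≤ (inferInstance : MeasurableSpace Ω) := by
    intro t
    refine iSup_le fun s => iSup_le fun _ => (hXmeas s).comap_le
  have hm0_le_Ft : ∀ t, (MeasurableSpace.comap (X 0) inferInstance) ≤ natSigma X t := by
    intro t
    exact le_iSup₂ (f := fun s (_ : s ∈ Finset.range (t+1)) =>
      MeasurableSpace.comap (X s) inferInstance) 0 (Finset.mem_range.mpr t.succ_pos)
  have hm0_le : (MeasurableSpace.comap (X 0) inferInstance) ≤ (inferInstance : MeasurableSpace Ω) := (hXmeas 0).comap_le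
  have hXmeasFt : ∀ s t, s ≤ t → Measurable[natSigma X t] (X s) := by
    intro s t hst
    have h1 : Measurable[MeasurableSpace.comap (X s) inferInstance] (X s) :=
      measurable_iff_comap_le.mpr le_rfl
    exact h1.mono (le_iSup₂ (f := fun s (_ : s ∈ Finset.range (t+1)) =>
      MeasurableSpace.comap (X s) inferInstance) s
      (Finset.mem_range.mpr (Nat.lt_succ_of_le hst))) le_rfl
  -- characterizations of T
  have hTlt : ∀ (t : ℕ) ω, ((t:ℕ∞) < T ω ↔ ∀ s ≤ t, xmin ≤ X s ω) := by
    intro t ω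
    rw [hT ω]
    constructor
    · intro h s hs
      by_contra hcon
      have hmem : ((s:ℕ∞)) ∈ ((fun n : ℕ => (n : ℕ∞)) '' {t : ℕ | X t ω < xmin}) :=
        ⟨s, not_le.mp hcon, rfl⟩
      exact absurd (lt_of_lt_of_le h (sInf_le hmem)) (by exact_mod_cast not_lt.mpr hs)
    · intro h
      have h1 : ((t+1 : ℕ) : ℕ∞) ≤ sInf ((fun n : ℕ => (n : ℕ∞)) '' {t : ℕ | X t ω < xmin}) := by
        refine le_sInf ?_
        rintro b ⟨s, hs, rfl⟩
        have : ¬ s ≤ t := fun hle => absurd hs (not_lt.mpr (h s hle))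
        show ((t+1:ℕ):ℕ∞) ≤ (s:ℕ∞)
        exact_mod_cast Nat.succ_le_of_lt (not_le.mp this)
      exact lt_of_lt_of_le (by exact_mod_cast Nat.lt_succ_self t) h1
  have hTle : ∀ (t : ℕ) ω, ((t:ℕ∞) ≤ T ω ↔ ∀ s < t, xmin ≤ X s ω) := by
    intro t ω
    rw [hT ω]
    constructor
    · intro h s hs
      by_contra hcon
      have hmem : ((s:ℕ∞)) ∈ ((fun n : ℕ => (n : ℕ∞)) '' {t : ℕ | X t ω < xmin}) :=
        ⟨s, not_le.mp hcon, rfl⟩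
      have := le_trans h (sInf_le hmem)
      exact absurd (by exact_mod_cast this) (not_le.mpr hs)
    · intro h
      refine le_sInf ?_
      rintro b ⟨s, hs, rfl⟩
      have : ¬ s < t := fun hlt => absurd hs (not_lt.mpr (h s hlt))
      show ((t:ℕ):ℕ∞) ≤ (s:ℕ∞)
      exact_mod_cast not_lt.mp this
  -- T = t implies X t ω < xmin
  have hThit : ∀ (t : ℕ) ω, (t:ℕ∞) ≤ T ω → ¬ ((t:ℕ∞) < T ω) → X t ω < xmin := by
    intro t ω hle hnlt
    have h1 := (hTle t ω).mp hle
    have h2 : ¬ ∀ s ≤ t, xmin ≤ X s ω := fun h => hnlt ((hTlt t ω).mpr h)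
    push_neg at h2
    obtain ⟨s, hs, hxs⟩ := h2
    rcases lt_or_eq_of_le hs with h | h
    · exact absurd (h1 s h) (not_le.mpr hxs)
    · exact h ▸ hxs
  -- events
  set E : ℕ → Set Ω := fun t => {ω | (t:ℕ∞) < T ω} with hEdef
  set E' : ℕ → Set Ω := fun t => {ω | (t:ℕ∞) ≤ T ω} with hE'def
  have hEmeasFt : ∀ t, MeasurableSet[natSigma X t] (E t) := by
    intro t
    have : E t = ⋂ (s : ℕ) (_ : s ≤ t), (X s) ⁻¹' (Set.Ici xmin) := by
      ext ω
      simp only [hEdef, Set.mem_setOf_eq, Set.mem_iInter, Set.mem_preimage, Set.mem_Ici]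
      exact hTlt t ω
    rw [this]
    exact MeasurableSet.iInter fun s => MeasurableSet.iInter fun hs =>
      (hXmeasFt s t hs) measurableSet_Ici
  have hEmeas : ∀ t, MeasurableSet (E t) := fun t => hFt_le t _ (hEmeasFt t)
  have hE'meas : ∀ t, MeasurableSet (E' t) := by
    intro t
    have : E' t = ⋂ (s : ℕ) (_ : s < t), (X s) ⁻¹' (Set.Ici xmin) := by
      ext ω
      simp only [hE'def, Set.mem_setOf_eq, Set.mem_iInter, Set.mem_preimage, Set.mem_Ici]
      exact hTle t ω
    rw [this]
    exact MeasurableSet.iInter fun s => MeasurableSet.iInter fun hs =>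
      (hXmeas s) measurableSet_Ici
  -- potential function
  set φ : ℝ → ℝ := fun x => if x < xmin then 0 else 1 + Real.log (x / xmin) with hφdef
  have hφmeas : Measurable φ := by
    refine Measurable.ite (measurableSet_lt measurable_id measurable_const) measurable_const ?_
    exact measurable_const.add (Real.measurable_log.comp (measurable_id.div_const xmin))
  have hφnonneg : ∀ x, 0 ≤ φ x := by
    intro x
    by_cases h : x < xmin
    · simp [hφdef, h]
    · simp only [hφdef, h, if_false]
      have : (1:ℝ) ≤ x / xmin := (one_le_div hxmin).mpr (not_lt.mp h)
      linarith [Real.log_nonneg this]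
  have hφle : ∀ x, φ x ≤ |x| / xmin := by
    intro x
    by_cases h : x < xmin
    · simp only [hφdef, h, if_true]
      positivity
    · simp only [hφdef, h, if_false]
      have hx : xmin ≤ x := not_lt.mp h
      have hpos : 0 < x / xmin := div_pos (lt_of_lt_of_le hxmin hx) hxmin
      have := Real.log_le_sub_one_of_pos hpos
      have hxabs : |x| = x := abs_of_pos (lt_of_lt_of_le hxmin hx)
      rw [hxabs]
      linarith
  -- stopped potential process
  set Z : ℕ → Ω → ℝ := fun t => (E' t).indicator (fun ω => φ (X t ω)) with hZdef
  have hZmeas : ∀ t, Measurable (Z t) := fun t =>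
    ((hφmeas.comp (hXmeas t)).indicator (hE'meas t))
  have hZnonneg : ∀ t ω, 0 ≤ Z t ω := by
    intro t ω
    exact Set.indicator_nonneg (fun ω _ => hφnonneg _) ω
  have hZbound : ∀ t ω, |Z t ω| ≤ xmin⁻¹ * |X t ω| := by
    intro t ω
    rw [abs_of_nonneg (hZnonneg t ω)]
    by_cases h : ω ∈ E' t
    · rw [hZdef]; simp only [Set.indicator_of_mem h]
      calc φ (X t ω) ≤ |X t ω| / xmin := hφle _
        _ = xmin⁻¹ * |X t ω| := by ring
    · rw [hZdef]; simp only [Set.indicator_of_notMem h]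
      positivity
  have hZint : ∀ t, Integrable (Z t) μ := by
    intro t
    refine Integrable.mono ((hXint t).const_mul xmin⁻¹) (hZmeas t).aestronglyMeasurable ?_
    refine Eventually.of_forall fun ω => ?_
    have := hZbound t ω
    simp only [Real.norm_eq_abs]
    calc |Z t ω| ≤ xmin⁻¹ * |X t ω| := this
      _ ≤ |xmin⁻¹ * X t ω| := by rw [abs_mul, abs_of_pos (by positivity : (0:ℝ) < xmin⁻¹)]
  -- indicator functions
  set I : ℕ → Ω → ℝ := fun t => (E t).indicator (fun _ => (1:ℝ)) with hIdef
  have hImeas : ∀ t, Measurable (I t) := fun t => (measurable_const.indicator (hEmeas t))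
  have hIint : ∀ t, Integrable (I t) μ := fun t =>
    (integrable_const (1:ℝ)).indicator (hEmeas t)
  -- the key step inequality at time t, conditional on natSigma X t
  have hkey : ∀ t : ℕ, (fun ω => δ * I t ω) ≤ᵐ[μ] μ[(fun ω => Z t ω - Z (t+1) ω) | natSigma X t] := by
    intro t
    have htlt1 : ∀ ω, ω ∈ E t → ((t+1:ℕ):ℕ∞) ≤ T ω := fun ω hE =>
      (hTle (t+1) ω).mpr (fun s hs => (hTlt t ω).mp hE s (Nat.lt_succ_iff.mp hs))
    set c : Ω → ℝ := (E t).indicator (fun ω => (X t ω)⁻¹) with hcdef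
    set B : Ω → ℝ := c * (fun ω => X t ω - X (t+1) ω) with hBdef
    have hcmeasFt : StronglyMeasurable[natSigma X t] c :=
      (((hXmeasFt t t le_rfl).inv).indicator (hEmeasFt t)).stronglyMeasurable
    have hcbound : ∀ ω, ‖c ω‖ ≤ xmin⁻¹ := by
      intro ω
      by_cases h : ω ∈ E t
      · have hXt : xmin ≤ X t ω := (hTlt t ω).mp h t le_rfl
        have hXtpos : 0 < X t ω := lt_of_lt_of_le hxmin hXt
        rw [hcdef]; simp only [Set.indicator_of_mem h, Real.norm_eq_abs,
          abs_of_pos (inv_pos.mpr hXtpos)]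
        exact inv_anti₀ hxmin hXt
      · rw [hcdef]; simp only [Set.indicator_of_notMem h, norm_zero]
        positivity
    have hXsub_int : Integrable (fun ω => X t ω - X (t+1) ω) μ := (hXint t).sub (hXint (t+1))
    have hBint : Integrable B μ := by
      refine Integrable.mono (hXsub_int.const_mul xmin⁻¹)
        ((hcmeasFt.mono (hFt_le t)).aestronglyMeasurable.mul
          hXsub_int.aestronglyMeasurable) ?_
      refine Eventually.of_forall fun ω => ?_
      simp only [hBdef, Pi.mul_apply, Real.norm_eq_abs, abs_mul]
      calc |c ω| * |X t ω - X (t+1) ω| ≤ xmin⁻¹ * |X t ω - X (t+1) ω| := by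
            refine mul_le_mul_of_nonneg_right ?_ (abs_nonneg _)
            simpa [Real.norm_eq_abs] using hcbound ω
        _ ≤ |xmin⁻¹| * |X t ω - X (t+1) ω| := by
            have hxi : (0:ℝ) < xmin⁻¹ := by positivity
            rw [abs_of_pos hxi]
    have hBcond : μ[B | natSigma X t] =ᵐ[μ] c * μ[(fun ω => X t ω - X (t+1) ω) | natSigma X t] :=
      condExp_stronglyMeasurable_mul_of_bound (hFt_le t) hcmeasFt hXsub_int xmin⁻¹
        (Eventually.of_forall hcbound)
    have hXtcond : μ[X t | natSigma X t] = X t :=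
      condExp_of_stronglyMeasurable (hFt_le t) ((hXmeasFt t t le_rfl).stronglyMeasurable) (hXint t)
    have hsub_cond : μ[(fun ω => X t ω - X (t+1) ω) | natSigma X t]
        =ᵐ[μ] fun ω => X t ω - (μ[X (t+1) | natSigma X t]) ω := by
      have h1 := condExp_sub (m := natSigma X t) (μ := μ) (hXint t) (hXint (t+1))
      refine h1.trans ?_
      rw [hXtcond]
      rfl
    -- pointwise comparison B ≤ Z t - Z (t+1)
    have hBD : B ≤ᵐ[μ] fun ω => Z t ω - Z (t+1) ω := by
      filter_upwards [hnonneg (t+1)] with ω hn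
      by_cases hE : ω ∈ E t
      · have htle : ω ∈ E' t := le_of_lt (show (t:ℕ∞) < T ω from hE)
        have ht1le : ω ∈ E' (t+1) := htlt1 ω hE
        have hXt : xmin ≤ X t ω := (hTlt t ω).mp hE t le_rfl
        have hXtpos : 0 < X t ω := lt_of_lt_of_le hxmin hXt
        have hX1 : 0 ≤ X (t+1) ω := hn ht1le
        have hZt : Z t ω = 1 + Real.log (X t ω / xmin) := by
          rw [hZdef]; simp only [Set.indicator_of_mem htle, hφdef, not_lt.mpr hXt, if_false]
        have hB : B ω = (X t ω)⁻¹ * (X t ω - X (t+1) ω) := by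
          rw [hBdef, hcdef]; simp [Set.indicator_of_mem hE]
        have h3 : (X t ω)⁻¹ * (X t ω - X (t+1) ω) = 1 - X (t+1) ω / X t ω := by
          field_simp
        by_cases h1 : X (t+1) ω < xmin
        · have hZ1 : Z (t+1) ω = 0 := by
            rw [hZdef]; simp only [Set.indicator_of_mem ht1le, hφdef, h1, if_true]
          rw [hB, hZt, hZ1, h3]
          have hlog : 0 ≤ Real.log (X t ω / xmin) := Real.log_nonneg ((one_le_div hxmin).2 hXt)
          have hq : 0 ≤ X (t+1) ω / X t ω := div_nonneg hX1 (le_of_lt hXtpos)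
          linarith
        · have hX1min : xmin ≤ X (t+1) ω := not_lt.mp h1
          have hX1pos : 0 < X (t+1) ω := lt_of_lt_of_le hxmin hX1min
          have hZ1 : Z (t+1) ω = 1 + Real.log (X (t+1) ω / xmin) := by
            rw [hZdef]; simp only [Set.indicator_of_mem ht1le, hφdef, h1, if_false]
          rw [hB, hZt, hZ1, h3]
          have hlog : Real.log (X (t+1) ω / X t ω) ≤ X (t+1) ω / X t ω - 1 :=
            Real.log_le_sub_one_of_pos (div_pos hX1pos hXtpos)
          have hlogdiff : Real.log (X t ω / xmin) - Real.log (X (t+1) ω / xmin)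
              = - Real.log (X (t+1) ω / X t ω) := by
            rw [Real.log_div (ne_of_gt hXtpos) (ne_of_gt hxmin),
              Real.log_div (ne_of_gt hX1pos) (ne_of_gt hxmin),
              Real.log_div (ne_of_gt hX1pos) (ne_of_gt hXtpos)]
            ring
          linarith
      · have hB0 : B ω = 0 := by
          rw [hBdef, hcdef]; simp [Set.indicator_of_notMem hE]
        have hZeq : Z t ω - Z (t+1) ω = 0 := by
          have h2 : ω ∉ E' (t+1) := by
            intro hcon
            exact hE (lt_of_lt_of_le (show (t:ℕ∞) < ((t+1:ℕ):ℕ∞) by exact_mod_cast Nat.lt_succ_self t)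
              (show ((t+1:ℕ):ℕ∞) ≤ T ω from hcon))
          by_cases hle : ω ∈ E' t
          · have hXlt : X t ω < xmin := hThit t ω hle hE
            have h1 : Z t ω = 0 := by
              rw [hZdef]; simp only [Set.indicator_of_mem hle, hφdef, hXlt, if_true]
            rw [h1, hZdef]; simp [Set.indicator_of_notMem h2]
          · rw [hZdef]; simp [Set.indicator_of_notMem hle, Set.indicator_of_notMem h2]
        rw [hB0, hZeq]
    have hcond1 : μ[B | natSigma X t] ≤ᵐ[μ] μ[(fun ω => Z t ω - Z (t+1) ω) | natSigma X t] :=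
      condExp_mono hBint ((hZint t).sub (hZint (t+1))) hBD
    have hlow : (fun ω => δ * I t ω) ≤ᵐ[μ] μ[B | natSigma X t] := by
      filter_upwards [hBcond, hsub_cond, hdrift t] with ω h1 h2 h3
      rw [h1]
      simp only [Pi.mul_apply]
      rw [h2]
      by_cases hE : ω ∈ E t
      · have hXt : xmin ≤ X t ω := (hTlt t ω).mp hE t le_rfl
        have hXtpos : 0 < X t ω := lt_of_lt_of_le hxmin hXt
        have hdr : δ * X t ω ≤ X t ω - (μ[X (t+1) | natSigma X t]) ω := h3 hE
        have hc : c ω = (X t ω)⁻¹ := by rw [hcdef]; simp [Set.indicator_of_mem hE]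
        have hI : I t ω = 1 := by rw [hIdef]; simp [Set.indicator_of_mem hE]
        rw [hc, hI, mul_one]
        calc δ = (X t ω)⁻¹ * (δ * X t ω) := by field_simp
          _ ≤ (X t ω)⁻¹ * (X t ω - (μ[X (t+1) | natSigma X t]) ω) :=
            mul_le_mul_of_nonneg_left hdr (inv_nonneg.mpr (le_of_lt hXtpos))
      · have hc : c ω = 0 := by rw [hcdef]; simp [Set.indicator_of_notMem hE]
        have hI : I t ω = 0 := by rw [hIdef]; simp [Set.indicator_of_notMem hE]
        rw [hc, hI]
        simp
    exact hlow.trans hcond1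
  -- the conditional bound at (MeasurableSpace.comap (X 0) inferInstance) for each t
  have hstep : ∀ t : ℕ, μ[(fun ω => δ * I t ω) | (MeasurableSpace.comap (X 0) inferInstance)] ≤ᵐ[μ] μ[(fun ω => Z t ω - Z (t+1) ω) | (MeasurableSpace.comap (X 0) inferInstance)] := by
    intro t
    have h1 : μ[(fun ω => δ * I t ω) | (MeasurableSpace.comap (X 0) inferInstance)]
        ≤ᵐ[μ] μ[μ[(fun ω => Z t ω - Z (t+1) ω) | natSigma X t] | (MeasurableSpace.comap (X 0) inferInstance)] :=
      condExp_mono ((hIint t).const_mul δ) integrable_condExp (hkey t)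
    refine h1.trans (EventuallyEq.le ?_)
    exact condExp_condExp_of_le (hm0_le_Ft t) (hFt_le t)
  -- G is the target bound function
  set G : Ω → ℝ := fun ω => 1 + Real.log (X 0 ω / xmin) with hGdef
  -- sum over t < n
  have hsum : ∀ n : ℕ, μ[(fun ω => δ * ∑ t ∈ Finset.range n, I t ω) | (MeasurableSpace.comap (X 0) inferInstance)]
      ≤ᵐ[μ] fun ω => G ω := by
    intro n
    have h1 : (fun ω => δ * ∑ t ∈ Finset.range n, I t ω)
        = ∑ t ∈ Finset.range n, (fun ω => δ * I t ω) := by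
      ext ω
      rw [Finset.sum_apply, Finset.mul_sum]
    have h2 : μ[(fun ω => δ * ∑ t ∈ Finset.range n, I t ω) | (MeasurableSpace.comap (X 0) inferInstance)]
        =ᵐ[μ] ∑ t ∈ Finset.range n, μ[(fun ω => δ * I t ω) | (MeasurableSpace.comap (X 0) inferInstance)] := by
      rw [h1]
      exact condExp_finsetSum (fun t _ => (hIint t).const_mul δ) _
    have h3 : (∑ t ∈ Finset.range n, μ[(fun ω => δ * I t ω) | (MeasurableSpace.comap (X 0) inferInstance)] : Ω → ℝ)
        ≤ᵐ[μ] ∑ t ∈ Finset.range n, μ[(fun ω => Z t ω - Z (t+1) ω) | (MeasurableSpace.comap (X 0) inferInstance)] := by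
      have hall : ∀ᵐ ω ∂μ, ∀ t : ℕ,
          (μ[(fun ω => δ * I t ω) | (MeasurableSpace.comap (X 0) inferInstance)]) ω
            ≤ (μ[(fun ω => Z t ω - Z (t+1) ω) | (MeasurableSpace.comap (X 0) inferInstance)]) ω :=
        ae_all_iff.mpr (fun t => hstep t)
      filter_upwards [hall] with ω hω
      simp only [Finset.sum_apply]
      exact Finset.sum_le_sum (fun t _ => hω t)
    have h4 : (∑ t ∈ Finset.range n, μ[(fun ω => Z t ω - Z (t+1) ω) | (MeasurableSpace.comap (X 0) inferInstance)] : Ω → ℝ)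
        =ᵐ[μ] μ[(fun ω => Z 0 ω - Z n ω) | (MeasurableSpace.comap (X 0) inferInstance)] := by
      have h5 : (fun ω => Z 0 ω - Z n ω)
          = ∑ t ∈ Finset.range n, (fun ω => Z t ω - Z (t+1) ω) := by
        ext ω
        rw [Finset.sum_apply]
        exact (Finset.sum_range_sub' (fun i => Z i ω) n).symm
      rw [h5]
      exact (condExp_finsetSum (fun t _ => (hZint t).sub (hZint (t+1))) _).symm
    have h6 : μ[(fun ω => Z 0 ω - Z n ω) | (MeasurableSpace.comap (X 0) inferInstance)]
        ≤ᵐ[μ] μ[Z 0 | (MeasurableSpace.comap (X 0) inferInstance)] := by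
      have h7 := condExp_sub (m := (MeasurableSpace.comap (X 0) inferInstance)) (μ := μ) (hZint 0) (hZint n)
      have h8 : 0 ≤ᵐ[μ] μ[Z n | (MeasurableSpace.comap (X 0) inferInstance)] :=
        condExp_nonneg (Eventually.of_forall (hZnonneg n))
      filter_upwards [h7, h8] with ω h7 h8
      simp only [Pi.zero_apply] at h8
      have heq : (fun ω => Z 0 ω - Z n ω) = Z 0 - Z n := rfl
      rw [heq, h7]
      simp only [Pi.sub_apply]
      linarith
    have h9 : μ[Z 0 | (MeasurableSpace.comap (X 0) inferInstance)] =ᵐ[μ] fun ω => G ω := by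
      have hE'0 : E' 0 = Set.univ := by
        ext ω
        simp only [hE'def, Set.mem_setOf_eq, Set.mem_univ, iff_true]
        exact zero_le
      have hZ0 : Z 0 = fun ω => φ (X 0 ω) := by
        rw [hZdef]
        simp [hE'0]
      have hmeas0 : StronglyMeasurable[MeasurableSpace.comap (X 0) inferInstance] (Z 0) := by
        rw [hZ0]
        exact (hφmeas.comp (measurable_iff_comap_le.mpr le_rfl)).stronglyMeasurable
      have h10 : μ[Z 0 | (MeasurableSpace.comap (X 0) inferInstance)] = Z 0 :=
        condExp_of_stronglyMeasurable hm0_le hmeas0 (hZint 0)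
      rw [h10]
      filter_upwards [hstart] with ω hω
      rw [hZ0]
      simp only [hGdef, hφdef, not_lt.mpr hω, if_false]
    exact h2.le.trans (h3.trans (h4.le.trans (h6.trans h9.le)))
  -- conditional bound via kernel
  have hker : ∀ n : ℕ, ∀ᵐ ω ∂μ,
      ∫ ω', (∑ t ∈ Finset.range n, I t ω') ∂(condExpKernel μ (MeasurableSpace.comap (X 0) inferInstance) ω) ≤ G ω / δ := by
    intro n
    have hFnint : Integrable (fun ω => ∑ t ∈ Finset.range n, I t ω) μ :=
      integrable_finset_sum _ (fun t _ => hIint t)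
    have hcond := condExp_ae_eq_integral_condExpKernel (F := ℝ) hm0_le hFnint
    have hsmul := condExp_smul (m := (MeasurableSpace.comap (X 0) inferInstance)) (μ := μ)
      δ (fun ω => ∑ t ∈ Finset.range n, I t ω)
    have hsmul' : μ[(fun ω => δ * ∑ t ∈ Finset.range n, I t ω) | (MeasurableSpace.comap (X 0) inferInstance)]
        =ᵐ[μ] δ • μ[(fun ω => ∑ t ∈ Finset.range n, I t ω) | (MeasurableSpace.comap (X 0) inferInstance)] := by
      have : (fun ω => δ * ∑ t ∈ Finset.range n, I t ω)
          = δ • (fun ω => ∑ t ∈ Finset.range n, I t ω) := by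
        ext ω; simp [smul_eq_mul]
      rw [this]
      exact hsmul
    filter_upwards [hsum n, hsmul', hcond] with ω h1 h2 h3
    rw [h2] at h1
    simp only [Pi.smul_apply, smul_eq_mul] at h1
    rw [h3] at h1
    rw [← le_div_iff₀' hδ] at h1
    exact h1
  -- combine over all n
  have hker' : ∀ᵐ ω ∂μ, ∀ n : ℕ,
      ∫ ω', (∑ t ∈ Finset.range n, I t ω') ∂(condExpKernel μ (MeasurableSpace.comap (X 0) inferInstance) ω) ≤ G ω / δ :=
    ae_all_iff.mpr hker
  -- final computation per ω
  filter_upwards [hker'] with ω hω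
  have hGnn : ∀ n : ℕ, 0 ≤ ∫ ω', (∑ t ∈ Finset.range n, I t ω')
      ∂(condExpKernel μ (MeasurableSpace.comap (X 0) inferInstance) ω) := by
    intro n
    refine integral_nonneg fun ω' => ?_
    refine Finset.sum_nonneg fun t _ => ?_
    exact Set.indicator_nonneg (fun _ _ => zero_le_one) ω'
  have hTpt : ∀ ω', (T ω' : ℝ≥0∞) = ∑' t : ℕ, (E t).indicator (fun _ => (1:ℝ≥0∞)) ω' := by
    intro ω'
    rw [enat_coe_eq_tsum]
    congr 1
    ext t
    by_cases h : ω' ∈ E t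
    · simp only [Set.indicator_of_mem h, if_pos (show (t:ℕ∞) < T ω' from h)]
    · simp only [Set.indicator_of_notMem h, if_neg (show ¬ (t:ℕ∞) < T ω' from h)]
  calc (∫⁻ ω', (T ω' : ℝ≥0∞) ∂(condExpKernel μ (MeasurableSpace.comap (X 0) inferInstance) ω))
      = ∑' t : ℕ, (condExpKernel μ (MeasurableSpace.comap (X 0) inferInstance) ω) (E t) := by
        calc (∫⁻ ω', (T ω' : ℝ≥0∞) ∂(condExpKernel μ (MeasurableSpace.comap (X 0) inferInstance) ω))
            = ∫⁻ ω', ∑' t : ℕ, (E t).indicator (fun _ => (1:ℝ≥0∞)) ω'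
                ∂(condExpKernel μ (MeasurableSpace.comap (X 0) inferInstance) ω) :=
              lintegral_congr hTpt
          _ = ∑' t : ℕ, ∫⁻ ω', (E t).indicator (fun _ => (1:ℝ≥0∞)) ω'
                ∂(condExpKernel μ (MeasurableSpace.comap (X 0) inferInstance) ω) :=
              lintegral_tsum (fun t => (measurable_one.indicator (hEmeas t)).aemeasurable)
          _ = ∑' t : ℕ, (condExpKernel μ (MeasurableSpace.comap (X 0) inferInstance) ω) (E t) :=
              tsum_congr fun t => lintegral_indicator_one (hEmeas t)
    _ = ⨆ n : ℕ, ∑ t ∈ Finset.range n,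
          (condExpKernel μ (MeasurableSpace.comap (X 0) inferInstance) ω) (E t) :=
        ENNReal.tsum_eq_iSup_nat
    _ ≤ ENNReal.ofReal ((1 + Real.log (X 0 ω / xmin)) / δ) := by
        refine iSup_le fun n => ?_
        have hsum_eq : ∑ t ∈ Finset.range n,
            (condExpKernel μ (MeasurableSpace.comap (X 0) inferInstance) ω) (E t)
            = ENNReal.ofReal (∫ ω', (∑ t ∈ Finset.range n, I t ω')
                ∂(condExpKernel μ (MeasurableSpace.comap (X 0) inferInstance) ω)) := by
          rw [integral_finset_sum _ (fun t _ =>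
            (integrable_const (1:ℝ)).indicator (hEmeas t))]
          rw [ENNReal.ofReal_sum_of_nonneg (fun t _ => integral_nonneg
            (fun ω' => Set.indicator_nonneg (fun _ _ => zero_le_one) ω'))]
          refine Finset.sum_congr rfl fun t _ => ?_
          simp only [hIdef]
          rw [integral_indicator_const (1:ℝ) (hEmeas t)]
          simp [ENNReal.ofReal_toReal (measure_ne_top _ _)]
        rw [hsum_eq]
        refine le_trans (ENNReal.ofReal_le_ofReal (hω n)) ?_
        exact le_of_eq rfl
end
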